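/- arXiv:1709.03449 — 9 statements merged into one kernel-verified Lean document; each statement's English description precedes it below -/
import Mathlib

section
/- Let s ≥ 1, N ≥ 1 and z ∈ ℤ^s with gcd(z_j, N) = 1 for all j. For each subset u ⊆ {1,…,s} define ℓ_u(x) = ∏_{j∈u} x_j · ∏_{j∉u} (1 − x_j) and the vertex weight w*_u = 2^{−s} − (1/N) ∑_{k=1}^{N−1} ℓ_u({zk/N}). Then the vertex modified lattice rule Q*(f) = ∑_{a∈{0,1}^s} w*_{supp(a)} f(a) + (1/N) ∑_{k=1}^{N−1} f({zk/N}) integrates all multilinear monomials exactly: for every e ∈ {0,1}^s, ∑_{a∈{0,1}^s} w*_{supp(a)} ∏_{j=1}^s a_j^{e_j} + (1/N) ∑_{k=1}^{N−1} ∏_{j=1}^s {z_j k/N}^{e_j} = ∏_{j=1}^s 1/(e_j + 1) = 2^{−|e|}. -/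
open Finset

lemma stmt0_aux (s : ℕ) (e : Fin s → ℕ) (he : ∀ j, e j ≤ 1) (x : Fin s → ℝ) :
    ∑ a : Fin s → Bool,
      ((∏ j ∈ Finset.univ.filter (fun j => a j = true), x j) *
        ∏ j ∈ Finset.univ.filter (fun j => a j = false), (1 - x j)) *
        ∏ j, (if a j then (1:ℝ) else 0) ^ e j = ∏ j, x j ^ e j := by
  have h1 : ∀ a : Fin s → Bool,
      ((∏ j ∈ Finset.univ.filter (fun j => a j = true), x j) *
        ∏ j ∈ Finset.univ.filter (fun j => a j = false), (1 - x j)) *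
        ∏ j, (if a j then (1:ℝ) else 0) ^ e j
      = ∏ j, ((if a j then x j else 1) * (if a j then 1 else 1 - x j) *
          (if a j then (1:ℝ) else 0) ^ e j) := by
    intro a
    rw [Finset.prod_filter, Finset.prod_filter, ← Finset.prod_mul_distrib,
      ← Finset.prod_mul_distrib]
    apply Finset.prod_congr rfl
    intro j _
    cases a j <;> simp
  simp only [h1]
  rw [← Fintype.piFinset_univ, ← Finset.prod_univ_sum (fun _ => (Finset.univ : Finset Bool))
    (fun j b => ((if b then x j else 1) * if b then 1 else 1 - x j) *
      (if b then (1:ℝ) else 0) ^ e j)]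
  apply Finset.prod_congr rfl
  intro j _
  rw [Fintype.sum_bool]
  rcases Nat.le_one_iff_eq_zero_or_eq_one.mp (he j) with h | h <;> simp [h]

lemma stmt0_aux2 (s : ℕ) (e : Fin s → ℕ) (he : ∀ j, e j ≤ 1) :
    ∑ a : Fin s → Bool, (1 / 2 ^ s : ℝ) * ∏ j, (if a j then (1:ℝ) else 0) ^ e j
      = ∏ j, (1 : ℝ) / ((e j : ℝ) + 1) := by
  have h2s : (1 / 2 ^ s : ℝ) = ∏ _j : Fin s, (1/2 : ℝ) := by
    rw [Finset.prod_const, Finset.card_univ, Fintype.card_fin, div_pow, one_pow]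
  have h1 : ∀ a : Fin s → Bool,
      (1 / 2 ^ s : ℝ) * ∏ j, (if a j then (1:ℝ) else 0) ^ e j
      = ∏ j, ((1/2 : ℝ) * (if a j then (1:ℝ) else 0) ^ e j) := by
    intro a
    rw [h2s, ← Finset.prod_mul_distrib]
  simp only [h1]
  rw [← Fintype.piFinset_univ, ← Finset.prod_univ_sum (fun _ => (Finset.univ : Finset Bool))
    (fun j b => (1/2 : ℝ) * (if b then (1:ℝ) else 0) ^ e j)]
  apply Finset.prod_congr rfl
  intro j _
  rw [Fintype.sum_bool]
  rcases Nat.le_one_iff_eq_zero_or_eq_one.mp (he j) with h | h <;> simp [h] <;> norm_num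

/-- Let `s ≥ 1`, `N ≥ 1` and `z ∈ ℤ^s` with `gcd(z_j, N) = 1` for all `j`.
With the vertex weights `w*_u = 2^{−s} − (1/N) ∑_{k=1}^{N−1} ℓ_u({zk/N})`, where
`ℓ_u(x) = ∏_{j∈u} x_j ∏_{j∉u}(1−x_j)`, the optimal vertex modified lattice rule integrates
all multilinear monomials exactly: for every `e ∈ {0,1}^s`,
`∑_{a∈{0,1}^s} w*_{supp(a)} ∏_j a_j^{e_j} + (1/N) ∑_{k=1}^{N−1} ∏_j {z_j k/N}^{e_j}
  = ∏_j 1/(e_j+1) = 2^{−|e|}`. -/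
theorem stmt0 (s N : ℕ) (hs : 1 ≤ s) (hN : 1 ≤ N) (z : Fin s → ℤ)
    (hz : ∀ j, Int.gcd (z j) N = 1)
    (e : Fin s → ℕ) (he : ∀ j, e j ≤ 1) :
    ((∑ a : Fin s → Bool,
        ((1 / 2 ^ s
            - (1 / (N : ℝ)) * ∑ k ∈ Finset.Icc 1 (N - 1),
                ((∏ j ∈ Finset.univ.filter (fun j => a j = true),
                    Int.fract ((z j : ℝ) * k / N)) *
                  ∏ j ∈ Finset.univ.filter (fun j => a j = false),
                    (1 - Int.fract ((z j : ℝ) * k / N)))) *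
          ∏ j, (if a j then (1 : ℝ) else 0) ^ e j))
      + (1 / (N : ℝ)) * ∑ k ∈ Finset.Icc 1 (N - 1),
          ∏ j, Int.fract ((z j : ℝ) * k / N) ^ e j
      = ∏ j, (1 : ℝ) / ((e j : ℝ) + 1)) ∧
    (∏ j, (1 : ℝ) / ((e j : ℝ) + 1)) = 1 / 2 ^ (∑ j, e j) := by
  constructor
  · have hB : ∑ a : Fin s → Bool,
        ((1 / (N : ℝ)) * ∑ k ∈ Finset.Icc 1 (N - 1),
            ((∏ j ∈ Finset.univ.filter (fun j => a j = true),
                Int.fract ((z j : ℝ) * k / N)) *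
              ∏ j ∈ Finset.univ.filter (fun j => a j = false),
                (1 - Int.fract ((z j : ℝ) * k / N)))) *
          ∏ j, (if a j then (1 : ℝ) else 0) ^ e j
        = (1 / (N : ℝ)) * ∑ k ∈ Finset.Icc 1 (N - 1),
            ∏ j, Int.fract ((z j : ℝ) * k / N) ^ e j := by
      simp only [mul_assoc, ← Finset.mul_sum]
      congr 1
      simp only [Finset.sum_mul]
      rw [Finset.sum_comm]
      apply Finset.sum_congr rfl
      intro k _
      exact stmt0_aux s e he (fun j => Int.fract ((z j : ℝ) * k / N))
    simp only [sub_mul, Finset.sum_sub_distrib]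
    rw [hB, stmt0_aux2 s e he]
    ring
  · have h : ∀ j : Fin s, (1 : ℝ) / ((e j : ℝ) + 1) = (1/2 : ℝ) ^ e j := by
      intro j
      rcases Nat.le_one_iff_eq_zero_or_eq_one.mp (he j) with h | h <;> simp [h] <;> norm_num
    simp only [h]
    rw [Finset.prod_pow_eq_pow_sum, div_pow, one_pow]
end

section
/- Let s ≥ 1, N ≥ 2, z ∈ ℤ^s with gcd(z_j, N) = 1 for all j, and let γ_1,…,γ_s > 0. Let w : {0,1}^s → ℝ be any assignment of vertex weights with ∑_{a∈{0,1}^s} w(a) = 1/N. Consider the vertex modified rule whose nodes are the 2^s vertices a ∈ {0,1}^s with weights w(a) together with the interior lattice points {zk/N}, k = 1,…,N−1, each with weight 1/N. Then the kernel quadratic form of this rule for the Korobov kernel K(x,y) = ∏_{j=1}^s (1 + 2π²γ_j B₂({x_j − y_j})) equals that of the unmodified lattice rule: ∑_{p,q} w_p w_q K(x_p, x_q) = (1/N²) ∑_{k,ℓ=0}^{N−1} K({zk/N}, {zℓ/N}), where the left-hand sum ranges over all pairs of nodes of the modified rule. -/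
open Finset Real

/-- Let `s ≥ 1`, `N ≥ 2`, `z ∈ ℤ^s` with `gcd(z_j,N) = 1`, `γ_j > 0`, and let
`w : {0,1}^s → ℝ` be vertex weights with `∑_a w(a) = 1/N`. For the Korobov kernel
`K(x,y) = ∏_j (1 + 2π²γ_j B₂({x_j − y_j}))`, the kernel quadratic form of the vertex
modified rule (vertices `a` with weights `w(a)` together with the interior lattice points
`{zk/N}`, `k = 1,…,N−1`, each with weight `1/N`) equals that of the unmodified lattice
rule `(1/N²) ∑_{k,ℓ=0}^{N−1} K({zk/N}, {zℓ/N})`. -/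
theorem stmt1 (s N : ℕ) (hs : 1 ≤ s) (hN : 2 ≤ N) (z : Fin s → ℤ)
    (hz : ∀ j, Int.gcd (z j) N = 1)
    (γ : Fin s → ℝ) (hγ : ∀ j, 0 < γ j)
    (w : (Fin s → Bool) → ℝ) (hw : ∑ a : Fin s → Bool, w a = 1 / N) :
    let B2 : ℝ → ℝ := fun t => t ^ 2 - t + 1 / 6
    let K : (Fin s → ℝ) → (Fin s → ℝ) → ℝ := fun x y =>
      ∏ j, (1 + 2 * π ^ 2 * γ j * B2 (Int.fract (x j - y j)))
    let v : (Fin s → Bool) → Fin s → ℝ := fun a j => if a j then 1 else 0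
    let P : ℕ → Fin s → ℝ := fun k j => Int.fract ((z j : ℝ) * k / N)
    (∑ a : Fin s → Bool, ∑ b : Fin s → Bool, w a * w b * K (v a) (v b))
      + (∑ a : Fin s → Bool, ∑ k ∈ Finset.Icc 1 (N - 1), w a * (1 / (N : ℝ)) * K (v a) (P k))
      + (∑ k ∈ Finset.Icc 1 (N - 1), ∑ a : Fin s → Bool, (1 / (N : ℝ)) * w a * K (P k) (v a))
      + (∑ k ∈ Finset.Icc 1 (N - 1), ∑ l ∈ Finset.Icc 1 (N - 1),
          (1 / (N : ℝ)) * (1 / (N : ℝ)) * K (P k) (P l))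
      = (1 / (N : ℝ) ^ 2) * ∑ k ∈ Finset.range N, ∑ l ∈ Finset.range N, K (P k) (P l) := by
  intro B2 K v P
  have hIcc : Finset.Icc 1 (N-1) = Finset.Ico 1 N := by
    rw [← Finset.Ico_add_one_right_eq_Icc]; congr 1; omega
  have hP0 : P 0 = fun _ => (0:ℝ) := by
    funext j; simp [P]
  have hKl : ∀ (a : Fin s → Bool) (x), K (v a) x = K (P 0) x := by
    intro a x
    refine Finset.prod_congr rfl fun j _ => ?_
    rw [hP0]
    congr 2
    by_cases h : a j
    · have : v a j - x j = -(x j) + (1:ℤ) := by simp [v, h]; ring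
      rw [this, Int.fract_add_intCast]; norm_num
    · simp [v, h]
  have hKr : ∀ (a : Fin s → Bool) (x), K x (v a) = K x (P 0) := by
    intro a x
    refine Finset.prod_congr rfl fun j _ => ?_
    rw [hP0]
    congr 2
    by_cases h : a j
    · have : x j - v a j = x j - (1:ℤ) := by simp [v, h]
      rw [this, Int.fract_sub_intCast]; norm_num
    · simp [v, h]
  have h1 : (∑ a : Fin s → Bool, ∑ b : Fin s → Bool, w a * w b * K (v a) (v b))
      = (1 / (N:ℝ)) * (1 / (N:ℝ)) * K (P 0) (P 0) := by
    have : ∀ a b : Fin s → Bool, K (v a) (v b) = K (P 0) (P 0) := fun a b => by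
      rw [hKl, hKr]
    simp_rw [this, ← Finset.sum_mul, ← Finset.mul_sum, ← Finset.sum_mul, hw]
  have h2 : (∑ a : Fin s → Bool, ∑ k ∈ Finset.Icc 1 (N - 1), w a * (1 / (N : ℝ)) * K (v a) (P k))
      = (1 / (N:ℝ)) * ∑ k ∈ Finset.Ico 1 N, (1 / (N:ℝ)) * K (P 0) (P k) := by
    rw [hIcc, Finset.sum_comm]
    rw [Finset.mul_sum]
    refine Finset.sum_congr rfl fun k _ => ?_
    simp_rw [hKl, ← Finset.sum_mul, hw]
    ring
  have h3 : (∑ k ∈ Finset.Icc 1 (N - 1), ∑ a : Fin s → Bool, (1 / (N : ℝ)) * w a * K (P k) (v a))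
      = (1 / (N:ℝ)) * ∑ k ∈ Finset.Ico 1 N, (1 / (N:ℝ)) * K (P k) (P 0) := by
    rw [hIcc, Finset.mul_sum]
    refine Finset.sum_congr rfl fun k _ => ?_
    simp_rw [hKr]
    rw [← Finset.sum_mul, ← Finset.mul_sum, hw]
    ring
  rw [h1, h2, h3, hIcc]
  have hsplit : ∀ f : ℕ → ℝ, ∑ k ∈ Finset.range N, f k = f 0 + ∑ k ∈ Finset.Ico 1 N, f k := by
    intro f
    rw [Finset.range_eq_Ico, Finset.sum_eq_sum_Ico_succ_bot (by omega : 0 < N)]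
  rw [hsplit]
  conv_rhs => rw [Finset.sum_congr rfl (fun k _ => hsplit (fun l => K (P k) (P l)))]
  rw [hsplit (fun l => K (P 0) (P l)), Finset.sum_add_distrib]
  simp only [mul_add, Finset.mul_sum]
  ring_nf
end

section
/- Let s ≥ 1, γ_1,…,γ_s > 0, let x_1,…,x_M ∈ [0,1]^s and let w_1,…,w_M ∈ ℝ with ∑_{k=1}^M w_k = 1. Then the following identity holds: ∑_{k,ℓ=1}^M w_k w_ℓ ∏_{j=1}^s (1 + γ_j B₁(x_{k,j}) B₁(x_{ℓ,j}) + γ_j B₂({x_{k,j} − x_{ℓ,j}})/2) − 1 = [∑_{k,ℓ=1}^M w_k w_ℓ ∏_{j=1}^s (1 + γ_j B₁(x_{k,j}) B₁(x_{ℓ,j})) − 1] + [∑_{k,ℓ=1}^M w_k w_ℓ ∏_{j=1}^s (1 + γ_j B₂({x_{k,j} − x_{ℓ,j}})/2) − 1] + ∑_{k,ℓ=1}^M w_k w_ℓ ∑_{∅≠u⊆{1,…,s}} ∑_{∅≠v⊊u} ∏_{j∈u∖v} γ_j B₁(x_{k,j}) B₁(x_{ℓ,j}) ∏_{j'∈v}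 γ_{j'} B₂({x_{k,j'} − x_{ℓ,j'}})/2. (The left side is the squared worst-case error of the rule in the unanchored Sobolev space of smoothness 1 with weights γ; the first bracket is the squared worst-case error in the multilinear space with weights γ/12, the second bracket that in the Korobov space of smoothness 1 with weights γ/(2π)², and the last term is the mixture term.) -/
open Finset

lemma key (n : ℕ) (a b : Fin n → ℝ) :
    ∏ j, (1 + a j + b j)
      = ∏ j, (1 + a j) + ∏ j, (1 + b j) - 1
        + ∑ u ∈ (univ : Finset (Fin n)).powerset.filter (fun u => u ≠ ∅),
            ∑ v ∈ u.powerset.filter (fun v => v ≠ ∅ ∧ v ≠ u),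
              (∏ j ∈ u \ v, a j) * ∏ j ∈ v, b j := by
  classical
  have expand : ∀ (c : Fin n → ℝ), ∏ j, (1 + c j)
      = ∑ u ∈ (univ : Finset (Fin n)).powerset, ∏ j ∈ u, c j := by
    intro c; simp only [add_comm (1:ℝ)]; rw [Finset.prod_add]; simp
  set F : Finset (Fin n) → Finset (Fin n) → ℝ :=
    fun u v => (∏ j ∈ u \ v, a j) * ∏ j ∈ v, b j with hF
  have h1 : ∏ j, (1 + a j + b j)
      = ∑ u ∈ (univ : Finset (Fin n)).powerset, ∑ v ∈ u.powerset, F u v := by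
    simp only [add_assoc]
    rw [expand (fun j => a j + b j)]
    refine Finset.sum_congr rfl fun u _ => ?_
    simp only [add_comm (a _)]
    rw [Finset.prod_add]
    exact Finset.sum_congr rfl fun v _ => mul_comm _ _
  have h2 : ∀ u : Finset (Fin n), ∑ v ∈ u.powerset, F u v
      = (∏ j ∈ u, a j) + ∑ v ∈ u.powerset.erase ∅, F u v := by
    intro u
    rw [← Finset.add_sum_erase _ (F u) (Finset.empty_mem_powerset u)]
    simp [hF]
  have h3 : ∑ u ∈ (univ : Finset (Fin n)).powerset, ∑ v ∈ u.powerset.erase ∅, F u v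
      = ∑ u ∈ (univ : Finset (Fin n)).powerset.filter (fun u => u ≠ ∅),
          ∑ v ∈ u.powerset.erase ∅, F u v := by
    rw [Finset.sum_filter]
    refine Finset.sum_congr rfl fun u _ => ?_
    by_cases h : u = ∅ <;> simp [h]
  have h4 : ∑ u ∈ (univ : Finset (Fin n)).powerset.filter (fun u => u ≠ ∅),
        ∑ v ∈ u.powerset.erase ∅, F u v
      = ∑ u ∈ (univ : Finset (Fin n)).powerset.filter (fun u => u ≠ ∅),
          ((∏ j ∈ u, b j)
            + ∑ v ∈ u.powerset.filter (fun v => v ≠ ∅ ∧ v ≠ u), F u v) := by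
    refine Finset.sum_congr rfl fun u hu => ?_
    have hune : u ≠ ∅ := (Finset.mem_filter.mp hu).2
    have hmem : u ∈ u.powerset.erase ∅ := by
      simp [Finset.mem_erase, hune]
    rw [← Finset.add_sum_erase _ (F u) hmem]
    have hset : (u.powerset.erase ∅).erase u
        = u.powerset.filter (fun v => v ≠ ∅ ∧ v ≠ u) := by
      ext v; simp [Finset.mem_erase]; tauto
    rw [hset]
    simp [hF]
  have h5 : ∑ u ∈ (univ : Finset (Fin n)).powerset.filter (fun u => u ≠ ∅), ∏ j ∈ u, b j
      = (∑ u ∈ (univ : Finset (Fin n)).powerset, ∏ j ∈ u, b j) - 1 := by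
    rw [Finset.filter_ne', ← Finset.add_sum_erase _ _
      (Finset.empty_mem_powerset (univ : Finset (Fin n)))]
    simp
  rw [h1, expand a, expand b]
  simp only [h2, Finset.sum_add_distrib, h3, h4, h5]
  ring

/-- decomposition of the squared worst-case error in the unanchored Sobolev
space of smoothness 1 into the multilinear part, the Korobov part, and the mixture term,
for any cubature rule with nodes `x_k ∈ [0,1]^s` and weights `w_k` summing to `1`. -/
theorem stmt2 (s M : ℕ) (hs : 1 ≤ s) (γ : Fin s → ℝ) (hγ : ∀ j, 0 < γ j)
    (x : Fin M → Fin s → ℝ) (hx : ∀ k j, x k j ∈ Set.Icc (0 : ℝ) 1)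
    (w : Fin M → ℝ) (hw : ∑ k, w k = 1) :
    let B1 : ℝ → ℝ := fun t => t - 1 / 2
    let B2 : ℝ → ℝ := fun t => t ^ 2 - t + 1 / 6
    (∑ k, ∑ l, w k * w l *
        ∏ j, (1 + γ j * B1 (x k j) * B1 (x l j)
                + γ j * B2 (Int.fract (x k j - x l j)) / 2)) - 1
      = ((∑ k, ∑ l, w k * w l * ∏ j, (1 + γ j * B1 (x k j) * B1 (x l j))) - 1)
        + ((∑ k, ∑ l, w k * w l *
              ∏ j, (1 + γ j * B2 (Int.fract (x k j - x l j)) / 2)) - 1)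
        + ∑ k, ∑ l, w k * w l *
            ∑ u ∈ Finset.univ.powerset.filter (fun u : Finset (Fin s) => u ≠ ∅),
              ∑ v ∈ u.powerset.filter (fun v => v ≠ ∅ ∧ v ≠ u),
                (∏ j ∈ u \ v, γ j * B1 (x k j) * B1 (x l j)) *
                  ∏ j ∈ v, γ j * B2 (Int.fract (x k j - x l j)) / 2 := by
  intro B1 B2
  have hww : ∑ k, ∑ l, w k * w l = 1 := by
    rw [← Finset.sum_mul_sum, hw]; ring
  have hkey : ∀ k l, (∏ j, (1 + γ j * B1 (x k j) * B1 (x l j)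
                + γ j * B2 (Int.fract (x k j - x l j)) / 2))
      = (∏ j, (1 + γ j * B1 (x k j) * B1 (x l j)))
        + (∏ j, (1 + γ j * B2 (Int.fract (x k j - x l j)) / 2)) - 1
        + ∑ u ∈ Finset.univ.powerset.filter (fun u : Finset (Fin s) => u ≠ ∅),
            ∑ v ∈ u.powerset.filter (fun v => v ≠ ∅ ∧ v ≠ u),
              (∏ j ∈ u \ v, γ j * B1 (x k j) * B1 (x l j)) *
                ∏ j ∈ v, γ j * B2 (Int.fract (x k j - x l j)) / 2 := fun k l =>
    key s (fun j => γ j * B1 (x k j) * B1 (x l j))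
      (fun j => γ j * B2 (Int.fract (x k j - x l j)) / 2)
  simp only [hkey, mul_add, mul_sub, mul_one, Finset.sum_add_distrib,
    Finset.sum_sub_distrib, hww]
  ring
end

section
/- Let N ≥ 1 and γ > 0. Consider the one-dimensional trapezoidal rule with nodes x_k = k/N for k = 0,1,…,N, and weights w_0 = w_N = 1/(2N) and w_k = 1/N for 1 ≤ k ≤ N−1. Then its squared worst-case error in the unanchored Sobolev space of smoothness 1 satisfies ∑_{k,ℓ=0}^N w_k w_ℓ (1 + γ B₁(x_k) B₁(x_ℓ) + γ B₂({x_k − x_ℓ})/2) − 1 = γ/(12 N²); equivalently, the worst-case error equals √(γ/12) · 1/N. -/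
open Finset

private lemma sum_cast_range' (n : ℕ) : ∑ i ∈ range n, (i:ℝ) = n*(n-1)/2 := by
  induction n with
  | zero => simp
  | succ m ih => rw [sum_range_succ, ih]; push_cast; ring

private lemma sum_sq_range' (n : ℕ) : ∑ i ∈ range n, (i:ℝ)^2 = n*(n-1)*(2*n-1)/6 := by
  induction n with
  | zero => simp
  | succ m ih => rw [sum_range_succ, ih]; push_cast; ring

private lemma trapsum (n : ℕ) (hn : 1 ≤ n) (f : ℕ → ℝ) :
    ∑ k ∈ range (n+1), (if k = 0 ∨ k = n then 1/(2*(n:ℝ)) else 1/n) * f k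
    = (1/n) * ∑ k ∈ range (n+1), f k - 1/(2*n) * f 0 - 1/(2*n) * f n := by
  have hn0 : (n:ℝ) ≠ 0 := Nat.cast_ne_zero.2 (by omega)
  have hdec : ∀ k ∈ range (n+1),
      (if k = 0 ∨ k = n then 1/(2*(n:ℝ)) else 1/n) * f k
      = (1/n) * f k - (if k = 0 then 1/(2*(n:ℝ)) * f k else 0)
        - (if k = n then 1/(2*(n:ℝ)) * f k else 0) := by
    intro k _
    rcases eq_or_ne k 0 with rfl | h0
    · have : (0:ℕ) ≠ n := by omega
      simp [this.symm, this]
      field_simp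
      ring
    · rcases eq_or_ne k n with rfl | h1
      · simp [h0]
        field_simp
        ring
      · simp [h0, h1]
  rw [Finset.sum_congr rfl hdec]
  rw [Finset.sum_sub_distrib, Finset.sum_sub_distrib, Finset.mul_sum,
    Finset.sum_ite_eq' (range (n+1)) 0, Finset.sum_ite_eq' (range (n+1)) n]
  simp [Nat.lt_succ_iff, hn]

private lemma trapsum_per (n : ℕ) (hn : 1 ≤ n) (f : ℕ → ℝ) (hf : f n = f 0) :
    ∑ k ∈ range (n+1), (if k = 0 ∨ k = n then 1/(2*(n:ℝ)) else 1/n) * f k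
    = (1/n) * ∑ k ∈ range n, f k := by
  have hn0 : (n:ℝ) ≠ 0 := Nat.cast_ne_zero.2 (by omega)
  rw [trapsum n hn f, sum_range_succ, hf]
  field_simp
  ring

private lemma shift_sum (n : ℕ) (f : ℕ → ℝ) (hf : ∀ r, f (r + n) = f r) (m : ℕ) :
    ∑ j ∈ range n, f (m + j) = ∑ j ∈ range n, f j := by
  induction m with
  | zero => simp
  | succ p ih =>
    have h1 : ∑ j ∈ range n, f (p + 1 + j) = ∑ j ∈ range n, f (p + j + 1) := by
      apply Finset.sum_congr rfl; intro j _; ring_nf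
    rw [h1, ← ih]
    have h2 := Finset.sum_range_succ' (fun j => f (p + j)) n
    have h3 := Finset.sum_range_succ (fun j => f (p + j)) n
    calc ∑ j ∈ range n, f (p + j + 1) = ∑ j ∈ range n, f (p + (j+1)) := by
          apply Finset.sum_congr rfl; intro j _; ring_nf
      _ = ∑ j ∈ range (n+1), f (p + j) - f (p + 0) := by rw [h2]; ring
      _ = ∑ j ∈ range n, f (p + j) + f (p + n) - f (p + 0) := by rw [h3]
      _ = ∑ j ∈ range n, f (p + j) := by rw [hf p]; simp

private lemma fract_nat_div (n : ℕ) (hn : 1 ≤ n) (m : ℕ) :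
    Int.fract ((m:ℝ)/n) = ((m % n : ℕ) : ℝ)/n := by
  have hn0 : (n:ℝ) ≠ 0 := Nat.cast_ne_zero.2 (by omega)
  have hnpos : (0:ℝ) < n := by positivity
  have hm : (m : ℝ) = n * (m / n : ℕ) + (m % n : ℕ) := by
    rw [← Nat.cast_mul, ← Nat.cast_add, Nat.div_add_mod]
  rw [hm]
  have h6 : ((n:ℝ) * (m / n : ℕ) + (m % n : ℕ)) / n = ((m / n : ℕ) : ℝ) + ((m % n : ℕ):ℝ)/n := by
    field_simp
  have h5 : Int.fract (((m / n : ℕ) : ℝ) + ((m % n : ℕ):ℝ)/n) = Int.fract (((m % n : ℕ):ℝ)/n) := by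
    rw [show ((m / n : ℕ) : ℝ) = (((m / n : ℕ) : ℤ) : ℝ) by norm_cast]
    exact Int.fract_intCast_add _ _
  rw [h6, h5, Int.fract_eq_self.2 ⟨by positivity, by
    rw [div_lt_one hnpos]
    exact_mod_cast Nat.mod_lt m (by omega)⟩]

private lemma fract_sub_div (n : ℕ) (hn : 1 ≤ n) (k l : ℕ) (hl : l ≤ n) :
    Int.fract ((k:ℝ)/n - (l:ℝ)/n) = (((k + (n - l)) % n : ℕ) : ℝ)/n := by
  have hn0 : (n:ℝ) ≠ 0 := Nat.cast_ne_zero.2 (by omega)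
  have h1 : (k:ℝ)/n - (l:ℝ)/n = ((k + (n - l) : ℕ) : ℝ)/n + (-1 : ℤ) := by
    have : ((k + (n - l) : ℕ) : ℝ) = (k:ℝ) + n - l := by
      push_cast [Nat.cast_sub hl]; ring
    rw [this]; field_simp; ring
  rw [h1, Int.fract_add_intCast, fract_nat_div n hn]

private lemma csum2 (n : ℕ) (hn : 1 ≤ n) :
    ∑ r ∈ range n, ((((r % n : ℕ):ℝ)/n) ^ 2 - ((r % n : ℕ):ℝ)/n + 1/6) = 1/(6*(n:ℝ)) := by
  have hn0 : (n:ℝ) ≠ 0 := Nat.cast_ne_zero.2 (by omega)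
  have h1 : ∀ r ∈ range n, ((((r % n : ℕ):ℝ)/n) ^ 2 - ((r % n : ℕ):ℝ)/n + 1/6)
      = ((r:ℝ)/n) ^ 2 - (r:ℝ)/n + 1/6 := by
    intro r hr
    rw [Nat.mod_eq_of_lt (mem_range.1 hr)]
  rw [Finset.sum_congr rfl h1]
  have h2 : ∀ r ∈ range n, ((r:ℝ)/n) ^ 2 - (r:ℝ)/n + 1/6
      = (1/(n:ℝ)^2) * (r:ℝ)^2 - (1/n) * (r:ℝ) + 1/6 := by
    intro r _; field_simp
  rw [Finset.sum_congr rfl h2, Finset.sum_add_distrib, Finset.sum_sub_distrib,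
    ← Finset.mul_sum, ← Finset.mul_sum, sum_cast_range', sum_sq_range', Finset.sum_const,
    Finset.card_range]
  field_simp
  ring

private lemma rowsum (n : ℕ) (hn : 1 ≤ n) (k : ℕ) :
    ∑ l ∈ range n, ((Int.fract ((k:ℝ)/n - (l:ℝ)/n))^2 - Int.fract ((k:ℝ)/n - (l:ℝ)/n) + 1/6)
      = 1/(6*(n:ℝ)) := by
  set c : ℕ → ℝ := fun r => (((r % n : ℕ):ℝ)/n)^2 - ((r % n : ℕ):ℝ)/n + 1/6 with hc
  have hper : ∀ r, c (r + n) = c r := by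
    intro r; simp only [hc, Nat.add_mod_right]
  have step1 : ∑ l ∈ range n,
      ((Int.fract ((k:ℝ)/n - (l:ℝ)/n))^2 - Int.fract ((k:ℝ)/n - (l:ℝ)/n) + 1/6)
      = ∑ l ∈ range n, c (k + (n - l)) := by
    apply Finset.sum_congr rfl
    intro l hl
    rw [fract_sub_div n hn k l (mem_range.1 hl).le]
  have step2 : ∑ l ∈ range n, c (k + (n - l)) = ∑ j ∈ range n, c (k + 1 + j) := by
    rw [← Finset.sum_range_reflect (fun j => c (k + 1 + j)) n]
    apply Finset.sum_congr rfl
    intro l hl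
    have hln := mem_range.1 hl
    congr 1
    omega
  rw [step1, step2, shift_sum n c hper (k+1)]
  simpa only [hc] using csum2 n hn

/-- Let `N ≥ 1` and `γ > 0`. The one-dimensional trapezoidal rule with nodes
`k/N`, `k = 0,…,N`, weights `1/(2N)` at the endpoints and `1/N` elsewhere, has squared
worst-case error `γ/(12N²)` in the unanchored Sobolev space of smoothness 1; equivalently,
worst-case error `√(γ/12)·(1/N)`. -/
theorem stmt3 (N : ℕ) (hN : 1 ≤ N) (γ : ℝ) (hγ : 0 < γ) :
    let B1 : ℝ → ℝ := fun t => t - 1 / 2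
    let B2 : ℝ → ℝ := fun t => t ^ 2 - t + 1 / 6
    let w : ℕ → ℝ := fun k => if k = 0 ∨ k = N then 1 / (2 * N) else 1 / N
    ((∑ k ∈ Finset.range (N + 1), ∑ l ∈ Finset.range (N + 1),
        w k * w l * (1 + γ * B1 ((k : ℝ) / N) * B1 ((l : ℝ) / N)
          + γ * B2 (Int.fract ((k : ℝ) / N - (l : ℝ) / N)) / 2)) - 1
      = γ / (12 * (N : ℝ) ^ 2)) ∧
    Real.sqrt ((∑ k ∈ Finset.range (N + 1), ∑ l ∈ Finset.range (N + 1),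
        w k * w l * (1 + γ * B1 ((k : ℝ) / N) * B1 ((l : ℝ) / N)
          + γ * B2 (Int.fract ((k : ℝ) / N - (l : ℝ) / N)) / 2)) - 1)
      = Real.sqrt (γ / 12) * (1 / N) := by
  
  intro B1 B2 w
  have hn0 : (N:ℝ) ≠ 0 := Nat.cast_ne_zero.2 (by omega)
  -- sum of weights is 1
  have hA : ∑ k ∈ range (N+1), w k = 1 := by
    have h := trapsum_per N hN (fun _ => (1:ℝ)) rfl
    simp only [mul_one, Finset.sum_const, Finset.card_range, nsmul_eq_mul] at h
    simp only [w]
    rw [h]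
    field_simp
  -- weighted sum of B1 values is 0
  have hB : ∑ k ∈ range (N+1), w k * B1 ((k:ℝ)/N) = 0 := by
    simp only [w, B1]
    rw [trapsum N hN]
    have h1 : ∀ k ∈ range (N+1), ((k:ℝ)/N - 1/2) = (1/(N:ℝ)) * (k:ℝ) - 1/2 := by
      intro k _; field_simp
    rw [Finset.sum_congr rfl h1, Finset.sum_sub_distrib, ← Finset.mul_sum,
      sum_cast_range', Finset.sum_const, Finset.card_range]
    push_cast
    field_simp
    ring
  -- the B2 double-sum row value
  have hrow : ∀ k : ℕ, ∑ l ∈ range (N+1),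
      w l * B2 (Int.fract ((k:ℝ)/N - (l:ℝ)/N)) = 1/(6*(N:ℝ)^2) := by
    intro k
    simp only [w, B2]
    set g : ℕ → ℝ := fun l => (Int.fract ((k:ℝ)/N - (l:ℝ)/N))^2
        - Int.fract ((k:ℝ)/N - (l:ℝ)/N) + 1/6 with hg
    have hfr : Int.fract ((k:ℝ)/N - ((N:ℕ):ℝ)/N) = Int.fract ((k:ℝ)/N - ((0:ℕ):ℝ)/N) := by
      have h7 : (k:ℝ)/N - ((N:ℕ):ℝ)/N = ((k:ℝ)/N - ((0:ℕ):ℝ)/N) + ((-1 : ℤ):ℝ) := by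
        push_cast; field_simp; ring
      rw [h7, Int.fract_add_intCast]
    have hper : g N = g 0 := by simp only [hg, hfr]
    have h := trapsum_per N hN g hper
    rw [h]
    have h8 : ∑ l ∈ range N, g l = 1/(6*(N:ℝ)) := rowsum N hN k
    rw [h8]
    field_simp
  -- collapse the double sum
  have hS : (∑ k ∈ Finset.range (N + 1), ∑ l ∈ Finset.range (N + 1),
        w k * w l * (1 + γ * B1 ((k : ℝ) / N) * B1 ((l : ℝ) / N)
          + γ * B2 (Int.fract ((k : ℝ) / N - (l : ℝ) / N)) / 2))
      = 1 + γ / (12 * (N:ℝ)^2) := by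
    have hinner : ∀ k ∈ range (N+1), ∑ l ∈ Finset.range (N + 1),
        w k * w l * (1 + γ * B1 ((k : ℝ) / N) * B1 ((l : ℝ) / N)
          + γ * B2 (Int.fract ((k : ℝ) / N - (l : ℝ) / N)) / 2)
        = w k * (∑ l ∈ range (N+1), w l)
          + γ * (w k * B1 ((k:ℝ)/N)) * (∑ l ∈ range (N+1), w l * B1 ((l:ℝ)/N))
          + (γ/2) * w k * (∑ l ∈ range (N+1), w l * B2 (Int.fract ((k:ℝ)/N - (l:ℝ)/N))) := by
      intro k _
      simp only [Finset.mul_sum]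
      rw [← Finset.sum_add_distrib, ← Finset.sum_add_distrib]
      apply Finset.sum_congr rfl
      intro l _
      ring
    rw [Finset.sum_congr rfl hinner]
    have hinner2 : ∀ k ∈ range (N+1),
        w k * (∑ l ∈ range (N+1), w l)
          + γ * (w k * B1 ((k:ℝ)/N)) * (∑ l ∈ range (N+1), w l * B1 ((l:ℝ)/N))
          + (γ/2) * w k * (∑ l ∈ range (N+1), w l * B2 (Int.fract ((k:ℝ)/N - (l:ℝ)/N)))
        = w k * (1 + (γ/2) * (1/(6*(N:ℝ)^2))) := by
      intro k _
      rw [hA, hB, hrow k]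
      ring
    rw [Finset.sum_congr rfl hinner2, ← Finset.sum_mul, hA]
    field_simp
    ring
  constructor
  · rw [hS]; ring
  · rw [hS]
    have h1 : 1 + γ / (12 * (N:ℝ)^2) - 1 = (γ/12) * (1/(N:ℝ))^2 := by
      field_simp
      ring
    rw [h1, Real.sqrt_mul (by positivity), Real.sqrt_sq (by positivity)]
end

section
/- Let N ≥ 3 and let z₁, z₂ ∈ ℤ with gcd(z₁, N) = gcd(z₂, N) = 1, and let w ∈ {1,…,N−1} satisfy w z₁ ≡ z₂ (mod N). Then ∑_{k,ℓ=1}^{N−1} B₁({z₁ k/N}) B₁({z₁ ℓ/N}) B₂({z₂(k−ℓ)/N}) = (1/(4π²)) ∑_{h ≥ 1, N ∤ h} cot²(π h w/N)/h², where the right-hand sum ranges over all positive integers h not divisible by N (and this series converges). -/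
open Real

lemma aux_geom (x : ℂ) (n : ℕ) :
    (x - 1) * ∑ m ∈ Finset.range n, (m : ℂ) * x ^ m
      = ((n : ℂ) - 1) * x ^ n - (∑ m ∈ Finset.range n, x ^ m) + 1 := by
  induction n with
  | zero => simp
  | succ n ih =>
      rw [Finset.sum_range_succ, Finset.sum_range_succ]
      push_cast
      ring_nf
      ring_nf at ih
      linear_combination ih


lemma exp_eq_of_int (x y : ℝ) (t : ℤ) (h : x - y = 2 * π * t) :
    Complex.exp (x * Complex.I) = Complex.exp (y * Complex.I) := by
  have hc : (x : ℂ) - y = 2 * π * t := by exact_mod_cast congrArg Complex.ofReal h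
  have : (x : ℂ) * Complex.I = y * Complex.I + (t : ℂ) * (2 * π * Complex.I) := by
    linear_combination Complex.I * hc
  rw [this, Complex.exp_add, Complex.exp_int_mul_two_pi_mul_I, mul_one]

lemma core_sum (N : ℕ) (hN : 1 ≤ N) (s : ℝ) (hs : Real.sin s ≠ 0)
    (hroot : Complex.exp ((2 * s : ℝ) * Complex.I) ^ N = 1) :
    ∑ m ∈ Finset.Icc 1 (N - 1), (((m : ℝ) / N - 1 / 2 : ℝ) : ℂ)
        * Complex.exp ((2 * s : ℝ) * Complex.I) ^ m
      = -(Complex.I / 2) * (Real.cot s : ℂ) := by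
  set ω : ℂ := Complex.exp ((2 * s : ℝ) * Complex.I) with hω
  set a : ℂ := (Real.sin s : ℂ) with ha
  set b : ℂ := (Real.cos s : ℂ) with hb
  have ha0 : a ≠ 0 := by
    simpa [ha] using Complex.ofReal_ne_zero.mpr hs
  have hpy : a ^ 2 + b ^ 2 = 1 := by
    rw [ha, hb]
    norm_cast
    exact_mod_cast Real.sin_sq_add_cos_sq s
  have hωval : ω = 1 - 2 * a ^ 2 + 2 * a * b * Complex.I := by
    rw [hω, Complex.exp_mul_I, ← Complex.ofReal_cos, ← Complex.ofReal_sin]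
    have hc : Real.cos (2 * s) = 1 - 2 * Real.sin s ^ 2 := by
      rw [Real.cos_two_mul]
      nlinarith [Real.sin_sq_add_cos_sq s]
    rw [hc, Real.sin_two_mul]
    push_cast
    rw [ha, hb, ← Complex.ofReal_sin, ← Complex.ofReal_cos]
    try ring
  have hω1 : ω - 1 ≠ 0 := by
    rw [hωval]
    intro hcon
    have h1 : (1 - 2 * a ^ 2 + 2 * a * b * Complex.I - 1) = 2 * a * (-(a) + b * Complex.I) := by
      ring
    rw [h1] at hcon
    rcases mul_eq_zero.mp hcon with h | h
    · exact ha0 (by simpa using h)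
    · have hre := congrArg Complex.re h
      simp [ha, hb] at hre
      exact hs hre
  have hgeom : ∑ m ∈ Finset.range N, ω ^ m = 0 := by
    rw [geom_sum_eq (by intro hcon; exact hω1 (by rw [hcon]; ring)) N, hroot]
    simp
  have hM : (ω - 1) * ∑ m ∈ Finset.range N, (m : ℂ) * ω ^ m = N := by
    rw [aux_geom, hroot, hgeom]
    ring
  have hNne : (N : ℂ) ≠ 0 := by exact_mod_cast Nat.cast_ne_zero.mpr (by omega)
  have hsplit : ∑ m ∈ Finset.range N, (((m : ℝ) / N - 1 / 2 : ℝ) : ℂ) * ω ^ m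
      = (∑ m ∈ Finset.Icc 1 (N - 1), (((m : ℝ) / N - 1 / 2 : ℝ) : ℂ) * ω ^ m) + (-(1/2) : ℂ) := by
    have hIcc : Finset.Icc 1 (N - 1) = Finset.Ico 1 N := by
      rw [← Finset.Ico_add_one_right_eq_Icc]
      congr 1
      omega
    rw [hIcc, Finset.range_eq_Ico, Finset.sum_eq_sum_Ico_succ_bot (by omega : 0 < N)]
    push_cast
    ring
  have hval : ∑ m ∈ Finset.range N, (((m : ℝ) / N - 1 / 2 : ℝ) : ℂ) * ω ^ m
      = (∑ m ∈ Finset.range N, (m : ℂ) * ω ^ m) / N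
        - (1 / 2) * ∑ m ∈ Finset.range N, ω ^ m := by
    rw [Finset.sum_div, Finset.mul_sum, ← Finset.sum_sub_distrib]
    apply Finset.sum_congr rfl
    intro m _
    push_cast
    ring
  have hcot : (Real.cot s : ℂ) = b / a := by
    rw [Real.cot_eq_cos_div_sin]
    push_cast [ha, hb]
    ring
  have hMval : ∑ m ∈ Finset.range N, (m : ℂ) * ω ^ m
      = (N : ℂ) * (-(Complex.I / 2) * (Real.cot s : ℂ) - 1 / 2) := by
    have key2 : (ω - 1) * (-(Complex.I) * b - a) = 2 * a := by
      rw [hωval]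
      linear_combination (2 * a) * hpy + (-2 * a * b ^ 2) * Complex.I_sq
    have hrw : -(Complex.I / 2) * (Real.cot s : ℂ) - 1 / 2
        = (-(Complex.I) * b - a) / (2 * a) := by
      rw [hcot]
      field_simp
    apply mul_left_cancel₀ hω1
    rw [hM, hrw]
    rw [show (ω - 1) * ((N : ℂ) * ((-(Complex.I) * b - a) / (2 * a)))
        = (N : ℂ) * ((ω - 1) * (-(Complex.I) * b - a)) / (2 * a) by ring, key2]
    field_simp
  linear_combination hval - hsplit + (1 / (N:ℂ)) * hMval - (1 / 2 : ℂ) * hgeom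
    + (-(1 / 2) - Complex.I * (Real.cot s : ℂ) / 2) * (mul_inv_cancel₀ hNne)


lemma sum_reindex {M : Type*} [AddCommMonoid M] (N : ℕ) (hN : 1 ≤ N) (z₁ : ℤ)
    (h₁ : IsCoprime z₁ (N : ℤ)) (F G : ℕ → M)
    (hFG : ∀ k m : ℕ, k ∈ Finset.Icc 1 (N - 1) → 1 ≤ m → m ≤ N - 1 →
      (N : ℤ) ∣ (z₁ * k - m) → F k = G m) :
    ∑ k ∈ Finset.Icc 1 (N - 1), F k = ∑ m ∈ Finset.Icc 1 (N - 1), G m := by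
  obtain ⟨u, v, huv⟩ := h₁
  have hNpos : (0 : ℤ) < N := by exact_mod_cast (by omega : 0 < N)
  have hNne : (N : ℤ) ≠ 0 := ne_of_gt hNpos
  -- basic fact: for coprime c, multiplication by c mod N maps Icc 1 (N-1) to itself
  have main : ∀ c : ℤ, IsCoprime (N : ℤ) c → ∀ k : ℕ, 1 ≤ k → k ≤ N - 1 →
      1 ≤ ((c * k) % N).toNat ∧ ((c * k) % N).toNat ≤ N - 1 := by
    intro c hc k hk1 hk2
    have h0 : 0 ≤ (c * k) % N := Int.emod_nonneg _ hNne
    have hlt : (c * k) % N < N := Int.emod_lt_of_pos _ hNpos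
    have hne : (c * k) % N ≠ 0 := by
      intro hcon
      have hdvd : (N : ℤ) ∣ c * k := Int.dvd_of_emod_eq_zero hcon
      have : (N : ℤ) ∣ (k : ℤ) := hc.dvd_of_dvd_mul_left hdvd
      have : N ∣ k := Int.ofNat_dvd.mp this
      have := Nat.le_of_dvd (by omega) this
      omega
    constructor
    · omega
    · omega
  have hcop1 : IsCoprime (N : ℤ) z₁ := ⟨v, u, by linarith [huv]⟩
  have hcopu : IsCoprime (N : ℤ) u := ⟨v, z₁, by linarith [huv]⟩
  -- inverse relation mod N
  have hinv : ∀ a : ℤ, (u * ((z₁ * a) % N)) % N = a % N := by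
    intro a
    have h1 : (u * ((z₁ * a) % N)) % N = (u * (z₁ * a)) % N := by
      rw [Int.mul_emod, Int.emod_emod_of_dvd _ dvd_rfl, ← Int.mul_emod]
    rw [h1]
    have h2 : u * (z₁ * a) = a + (-(v * a)) * N := by linear_combination a * huv
    rw [h2, Int.add_mul_emod_self_right]
  have hinv' : ∀ a : ℤ, (z₁ * ((u * a) % N)) % N = a % N := by
    intro a
    have h1 : (z₁ * ((u * a) % N)) % N = (z₁ * (u * a)) % N := by
      rw [Int.mul_emod, Int.emod_emod_of_dvd _ dvd_rfl, ← Int.mul_emod]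
    rw [h1]
    have h2 : z₁ * (u * a) = a + (-(v * a)) * N := by linear_combination a * huv
    rw [h2, Int.add_mul_emod_self_right]
  refine Finset.sum_nbij' (fun k : ℕ => ((z₁ * k) % N).toNat)
    (fun m : ℕ => ((u * m) % N).toNat) ?_ ?_ ?_ ?_ ?_
  · intro k hk
    simp only [Finset.mem_Icc] at hk ⊢
    exact main z₁ hcop1 k hk.1 hk.2
  · intro m hm
    simp only [Finset.mem_Icc] at hm ⊢
    exact main u hcopu m hm.1 hm.2
  · intro k hk
    simp only [Finset.mem_Icc] at hk
    have h0 : 0 ≤ (z₁ * k) % N := Int.emod_nonneg _ hNne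
    have : ((((z₁ * (k : ℤ)) % N).toNat : ℤ)) = (z₁ * k) % N := Int.toNat_of_nonneg h0
    have heq : (u * (((z₁ * (k : ℤ)) % N).toNat : ℤ)) % N = (k : ℤ) % N := by
      rw [this]; exact hinv k
    have hksmall : (k : ℤ) % N = k := Int.emod_eq_of_lt (by positivity) (by exact_mod_cast (by omega : k < N))
    show ((u * (((z₁ * (k : ℤ)) % N).toNat : ℤ)) % N).toNat = k
    rw [heq, hksmall, Int.toNat_natCast]
  · intro m hm
    simp only [Finset.mem_Icc] at hm
    have h0 : 0 ≤ (u * m) % N := Int.emod_nonneg _ hNne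
    have : ((((u * (m : ℤ)) % N).toNat : ℤ)) = (u * m) % N := Int.toNat_of_nonneg h0
    have heq : (z₁ * (((u * (m : ℤ)) % N).toNat : ℤ)) % N = (m : ℤ) % N := by
      rw [this]; exact hinv' m
    have hmsmall : (m : ℤ) % N = m := Int.emod_eq_of_lt (by positivity) (by exact_mod_cast (by omega : m < N))
    show ((z₁ * (((u * (m : ℤ)) % N).toNat : ℤ)) % N).toNat = m
    rw [heq, hmsmall, Int.toNat_natCast]
  · intro k hk
    simp only [Finset.mem_Icc] at hk
    obtain ⟨hm1, hm2⟩ := main z₁ hcop1 k hk.1 hk.2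
    apply hFG k _ (Finset.mem_Icc.mpr hk) hm1 hm2
    have h0 : 0 ≤ (z₁ * k) % N := Int.emod_nonneg _ hNne
    rw [Int.toNat_of_nonneg h0]
    exact Int.dvd_of_emod_eq_zero (by
      rw [Int.sub_emod, Int.emod_emod_of_dvd _ dvd_rfl, ← Int.sub_emod]
      simp)


lemma eval_bern2 (x : ℝ) :
    (Polynomial.map (algebraMap ℚ ℝ) (Polynomial.bernoulli 2)).eval x = x ^ 2 - x + 1 / 6 := by
  simp [Polynomial.bernoulli, Finset.sum_range_succ, bernoulli, bernoulli'_two]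
  ring

lemma hB2 (x : ℝ) (hx : x ∈ Set.Icc (0:ℝ) 1) :
    HasSum (fun n : ℕ => 1 / (n:ℝ) ^ 2 * Real.cos (2 * π * n * x))
      (π ^ 2 * (x ^ 2 - x + 1 / 6)) := by
  have h := hasSum_one_div_nat_pow_mul_cos (k := 1) one_ne_zero hx
  rw [eval_bern2] at h
  norm_num at h
  convert h using 2
  norm_num
  ring

lemma fract_eq_div (N : ℕ) (hN : 0 < N) (z : ℤ) (k m : ℕ) (hm : m < N) (q : ℤ)
    (hq : z * k - m = N * q) : Int.fract ((z:ℝ) * k / N) = (m:ℝ) / N := by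
  have hN0 : (0:ℝ) < N := by exact_mod_cast hN
  have hq' : (z:ℝ) * k = N * q + m := by
    have := congrArg (fun r : ℤ => (r : ℝ)) hq
    push_cast at this
    linarith
  have harg : (z:ℝ) * k / N = (q:ℝ) + (m:ℝ) / N := by
    field_simp [hq']
    linarith [hq']
  rw [harg]
  rw [show ((q:ℝ) + (m:ℝ)/N) = ((q:ℤ):ℝ) + (m:ℝ)/N by norm_num, Int.fract_intCast_add]
  exact Int.fract_eq_self.mpr ⟨by positivity, by rw [div_lt_one hN0]; exact_mod_cast hm⟩



/-- Let `N ≥ 3`, `z₁, z₂ ∈ ℤ` with `gcd(z₁,N) = gcd(z₂,N) = 1`, and let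
`w ∈ {1,…,N−1}` satisfy `w z₁ ≡ z₂ (mod N)`. Then
`∑_{k,ℓ=1}^{N−1} B₁({z₁k/N}) B₁({z₁ℓ/N}) B₂({z₂(k−ℓ)/N})
  = (1/(4π²)) ∑_{h ≥ 1, N ∤ h} cot²(πhw/N)/h²`,
where the right-hand series (over positive integers `h` not divisible by `N`) converges. -/
theorem stmt5 (N : ℕ) (hN : 3 ≤ N) (z₁ z₂ : ℤ)
    (h₁ : Int.gcd z₁ N = 1) (h₂ : Int.gcd z₂ N = 1)
    (w : ℕ) (hw1 : 1 ≤ w) (hw2 : w ≤ N - 1)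
    (hwz : (w : ℤ) * z₁ ≡ z₂ [ZMOD (N : ℤ)]) :
    Summable (fun h : ℕ => if 1 ≤ h ∧ ¬ (N ∣ h) then
        Real.cot (π * h * w / N) ^ 2 / (h : ℝ) ^ 2 else 0) ∧
    ∑ k ∈ Finset.Icc 1 (N - 1), ∑ l ∈ Finset.Icc 1 (N - 1),
        (Int.fract ((z₁ : ℝ) * k / N) - 1 / 2) *
          (Int.fract ((z₁ : ℝ) * l / N) - 1 / 2) *
          (Int.fract (((z₂ * ((k : ℤ) - (l : ℤ)) : ℤ) : ℝ) / N) ^ 2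
            - Int.fract (((z₂ * ((k : ℤ) - (l : ℤ)) : ℤ) : ℝ) / N) + 1 / 6)
      = (1 / (4 * π ^ 2)) * ∑' h : ℕ, if 1 ≤ h ∧ ¬ (N ∣ h) then
          Real.cot (π * h * w / N) ^ 2 / (h : ℝ) ^ 2 else 0 := by
  have hπ : (π : ℝ) ≠ 0 := Real.pi_ne_zero
  have hN0 : (0:ℝ) < N := by exact_mod_cast (by omega : 0 < N)
  have hNne : (N:ℝ) ≠ 0 := ne_of_gt hN0
  have hNC : (N:ℂ) ≠ 0 := by exact_mod_cast hNne
  have hcz₁ : IsCoprime z₁ (N:ℤ) := Int.isCoprime_iff_gcd_eq_one.mpr h₁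
  obtain ⟨t, ht⟩ : ∃ t : ℤ, z₂ - (w:ℤ) * z₁ = N * t := hwz.dvd
  have hcz₂ : IsCoprime z₂ (N:ℤ) := Int.isCoprime_iff_gcd_eq_one.mpr h₂
  obtain ⟨a, b, hab⟩ := hcz₂
  have hcwz : IsCoprime ((w:ℤ) * z₁) (N:ℤ) :=
    ⟨a, b + a * t, by linear_combination hab - a * ht⟩
  have hcw : IsCoprime (w:ℤ) (N:ℤ) := hcwz.of_mul_left_left
  have hcwN : Nat.Coprime w N := by
    have h := Int.isCoprime_iff_gcd_eq_one.mp hcw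
    rwa [Int.gcd_natCast_natCast] at h
  -- sine nonvanishing
  have hsin : ∀ n : ℕ, ¬ N ∣ n → Real.sin (π * n * w / N) ≠ 0 := by
    intro n hn hcon
    obtain ⟨tt, htt⟩ := Real.sin_eq_zero_iff.mp hcon
    have h3 : ((tt:ℝ) * N) * π = ((n:ℝ) * w) * π := by
      field_simp at htt
      rw [htt]
    have h2 : (tt : ℝ) * N = (n : ℝ) * w := mul_right_cancel₀ hπ h3
    have h4 : tt * (N:ℤ) = ((n * w : ℕ) : ℤ) := by exact_mod_cast h2
    have h5 : (N:ℤ) ∣ ((n * w : ℕ) : ℤ) := ⟨tt, by rw [← h4]; ring⟩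
    have h6 : N ∣ n * w := Int.ofNat_dvd.mp h5
    exact hn (Nat.Coprime.dvd_of_dvd_mul_right hcwN.symm h6)
  -- the exponential-sum evaluation
  have hE : ∀ n : ℕ, ¬ N ∣ n →
      ∑ k ∈ Finset.Icc 1 (N-1), ((Int.fract ((z₁:ℝ) * k / N) - 1/2 : ℝ) : ℂ)
          * Complex.exp ((2 * π * n * (z₂:ℝ) * k / N : ℝ) * Complex.I)
        = -(Complex.I / 2) * ((Real.cot (π * n * w / N) : ℝ) : ℂ) := by
    intro n hn
    have hroot : Complex.exp ((2 * (π * n * w / N) : ℝ) * Complex.I) ^ N = 1 := by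
      rw [← Complex.exp_nat_mul]
      have harg : (N:ℂ) * (((2 * (π * n * w / N) : ℝ) : ℂ) * Complex.I)
          = ((n * w : ℤ) : ℂ) * (2 * π * Complex.I) := by
        push_cast
        field_simp
      rw [harg, Complex.exp_int_mul_two_pi_mul_I]
    refine Eq.trans ?_ (core_sum N (by omega) (π * n * w / N) (hsin n hn) hroot)
    refine sum_reindex N (by omega) z₁ hcz₁ _ _ ?_
    intro k m hk hm1 hm2 hdv
    simp only [Finset.mem_Icc] at hk
    obtain ⟨q, hq⟩ := hdv
    have hfract : Int.fract ((z₁:ℝ) * k / N) = (m:ℝ) / N :=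
      fract_eq_div N (by omega) z₁ k m (by omega) q hq
    have hexp : Complex.exp ((2 * π * n * (z₂:ℝ) * k / N : ℝ) * Complex.I)
        = Complex.exp ((2 * (π * n * w / N) : ℝ) * Complex.I) ^ m := by
      rw [← Complex.exp_nat_mul]
      have harg2 : ((m:ℂ)) * (((2 * (π * n * w / N) : ℝ) : ℂ) * Complex.I)
          = ((2 * π * n * w * m / N : ℝ) : ℂ) * Complex.I := by
        push_cast
        ring
      rw [harg2]
      refine (exp_eq_of_int _ _ (-((n:ℤ) * (t * k + w * q))) ?_).symm
      have key : (z₂ * k - w * m : ℤ) = N * (t * k + w * q) := by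
        linear_combination k * ht + w * hq
      have keyR : (z₂ : ℝ) * k - (w:ℝ) * m = N * ((t:ℝ) * k + w * q) := by
        exact_mod_cast key
      push_cast
      field_simp
      linear_combination (-(n:ℝ)) * keyR
    rw [hfract, hexp]
  -- the A-sum is zero
  have hA0 : ∑ k ∈ Finset.Icc 1 (N-1), (Int.fract ((z₁:ℝ) * k / N) - 1/2) = 0 := by
    have h1 : ∑ k ∈ Finset.Icc 1 (N-1), (Int.fract ((z₁:ℝ) * k / N) - 1/2)
        = ∑ m ∈ Finset.Icc 1 (N-1), ((m:ℝ)/N - 1/2) := by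
      refine sum_reindex N (by omega) z₁ hcz₁ _ _ ?_
      intro k m hk hm1 hm2 hdv
      obtain ⟨q, hq⟩ := hdv
      rw [fract_eq_div N (by omega) z₁ k m (by omega) q hq]
    have hg : (∑ i ∈ Finset.range N, (i:ℝ)) = N * ((N:ℝ) - 1) / 2 := by
      have h := Finset.sum_range_id_mul_two N
      have hc := congrArg (fun x : ℕ => (x:ℝ)) h
      push_cast [Nat.cast_sub (by omega : 1 ≤ N)] at hc
      linarith
    have hIcc : Finset.Icc 1 (N - 1) = Finset.Ico 1 N := by
      rw [← Finset.Ico_add_one_right_eq_Icc]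
      congr 1
      omega
    have h2 : ∑ m ∈ Finset.range N, ((m:ℝ)/N - 1/2)
        = ((0:ℝ)/N - 1/2) + ∑ m ∈ Finset.Icc 1 (N-1), ((m:ℝ)/N - 1/2) := by
      rw [hIcc, Finset.range_eq_Ico, Finset.sum_eq_sum_Ico_succ_bot (by omega : 0 < N)]
      norm_num
    have h3 : ∑ m ∈ Finset.range N, ((m:ℝ)/N - 1/2) = -(1/2) := by
      rw [Finset.sum_sub_distrib, ← Finset.sum_div, hg, Finset.sum_const, Finset.card_range]
      field_simp
      ring
    rw [h1]
    rw [h3] at h2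
    have h5 : ((0:ℝ)/N - 1/2) = -(1/2) := by norm_num
    linarith [h2, h5]
  -- pointwise evaluation of the double cosine sum
  have hpoint : ∀ n : ℕ,
      ∑ p ∈ (Finset.Icc 1 (N-1)) ×ˢ (Finset.Icc 1 (N-1)),
        ((Int.fract ((z₁:ℝ) * p.1 / N) - 1/2) * (Int.fract ((z₁:ℝ) * p.2 / N) - 1/2)) *
          (1 / (n:ℝ) ^ 2 * Real.cos (2 * π * n *
            Int.fract (((z₂ * ((p.1:ℤ) - (p.2:ℤ)) : ℤ) : ℝ) / N)))
      = (1/4) * (if 1 ≤ n ∧ ¬ (N ∣ n) then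
          Real.cot (π * n * w / N) ^ 2 / (n : ℝ) ^ 2 else 0) := by
    intro n
    rcases Nat.eq_zero_or_pos n with rfl | hn1
    · norm_num
    have hcos : ∀ p : ℕ × ℕ,
        Real.cos (2 * π * n * Int.fract (((z₂ * ((p.1:ℤ) - (p.2:ℤ)) : ℤ) : ℝ) / N))
          = Real.cos (2 * π * n * (z₂:ℝ) * p.1 / N - 2 * π * n * (z₂:ℝ) * p.2 / N) := by
      intro p
      set r : ℝ := ((z₂ * ((p.1:ℤ) - (p.2:ℤ)) : ℤ) : ℝ) / N with hr
      have h1 : 2 * π * n * Int.fract r = 2 * π * n * r - ((n : ℤ) * ⌊r⌋ : ℤ) * (2 * π) := by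
        rw [← Int.self_sub_floor r]
        push_cast
        ring
      have h2 : 2 * π * n * r = 2 * π * n * (z₂:ℝ) * p.1 / N - 2 * π * n * (z₂:ℝ) * p.2 / N := by
        rw [hr]
        push_cast
        ring
      rw [h1, Real.cos_sub_int_mul_two_pi, h2]
    have hfact : ∑ p ∈ (Finset.Icc 1 (N-1)) ×ˢ (Finset.Icc 1 (N-1)),
        ((Int.fract ((z₁:ℝ) * p.1 / N) - 1/2) * (Int.fract ((z₁:ℝ) * p.2 / N) - 1/2)) *
          (1 / (n:ℝ) ^ 2 * Real.cos (2 * π * n *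
            Int.fract (((z₂ * ((p.1:ℤ) - (p.2:ℤ)) : ℤ) : ℝ) / N)))
        = (1 / (n:ℝ) ^ 2) * ∑ p ∈ (Finset.Icc 1 (N-1)) ×ˢ (Finset.Icc 1 (N-1)),
        ((Int.fract ((z₁:ℝ) * p.1 / N) - 1/2) * (Int.fract ((z₁:ℝ) * p.2 / N) - 1/2)) *
          Real.cos (2 * π * n * (z₂:ℝ) * p.1 / N - 2 * π * n * (z₂:ℝ) * p.2 / N) := by
      rw [Finset.mul_sum]
      refine Finset.sum_congr rfl fun p hp => ?_
      rw [hcos p]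
      ring
    have hsplit : ∑ p ∈ (Finset.Icc 1 (N-1)) ×ˢ (Finset.Icc 1 (N-1)),
        ((Int.fract ((z₁:ℝ) * p.1 / N) - 1/2) * (Int.fract ((z₁:ℝ) * p.2 / N) - 1/2)) *
          Real.cos (2 * π * n * (z₂:ℝ) * p.1 / N - 2 * π * n * (z₂:ℝ) * p.2 / N)
        = (∑ k ∈ Finset.Icc 1 (N-1), (Int.fract ((z₁:ℝ) * k / N) - 1/2)
            * Real.cos (2 * π * n * (z₂:ℝ) * k / N)) ^ 2
          + (∑ k ∈ Finset.Icc 1 (N-1), (Int.fract ((z₁:ℝ) * k / N) - 1/2)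
            * Real.sin (2 * π * n * (z₂:ℝ) * k / N)) ^ 2 := by
      rw [Finset.sum_product]
      have hrow : ∀ k : ℕ, ∑ l ∈ Finset.Icc 1 (N-1),
          ((Int.fract ((z₁:ℝ) * k / N) - 1/2) * (Int.fract ((z₁:ℝ) * l / N) - 1/2)) *
            Real.cos (2 * π * n * (z₂:ℝ) * k / N - 2 * π * n * (z₂:ℝ) * l / N)
          = ((Int.fract ((z₁:ℝ) * k / N) - 1/2) * Real.cos (2 * π * n * (z₂:ℝ) * k / N))
              * (∑ l ∈ Finset.Icc 1 (N-1), (Int.fract ((z₁:ℝ) * l / N) - 1/2)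
                  * Real.cos (2 * π * n * (z₂:ℝ) * l / N))
            + ((Int.fract ((z₁:ℝ) * k / N) - 1/2) * Real.sin (2 * π * n * (z₂:ℝ) * k / N))
              * (∑ l ∈ Finset.Icc 1 (N-1), (Int.fract ((z₁:ℝ) * l / N) - 1/2)
                  * Real.sin (2 * π * n * (z₂:ℝ) * l / N)) := by
        intro k
        rw [Finset.mul_sum, Finset.mul_sum, ← Finset.sum_add_distrib]
        refine Finset.sum_congr rfl fun l hl => ?_
        rw [Real.cos_sub]
        ring
      calc ∑ k ∈ Finset.Icc 1 (N-1), ∑ l ∈ Finset.Icc 1 (N-1),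
            ((Int.fract ((z₁:ℝ) * k / N) - 1/2) * (Int.fract ((z₁:ℝ) * l / N) - 1/2)) *
              Real.cos (2 * π * n * (z₂:ℝ) * k / N - 2 * π * n * (z₂:ℝ) * l / N)
          = ∑ k ∈ Finset.Icc 1 (N-1),
            (((Int.fract ((z₁:ℝ) * k / N) - 1/2) * Real.cos (2 * π * n * (z₂:ℝ) * k / N))
              * (∑ l ∈ Finset.Icc 1 (N-1), (Int.fract ((z₁:ℝ) * l / N) - 1/2)
                  * Real.cos (2 * π * n * (z₂:ℝ) * l / N))
            + ((Int.fract ((z₁:ℝ) * k / N) - 1/2) * Real.sin (2 * π * n * (z₂:ℝ) * k / N))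
              * (∑ l ∈ Finset.Icc 1 (N-1), (Int.fract ((z₁:ℝ) * l / N) - 1/2)
                  * Real.sin (2 * π * n * (z₂:ℝ) * l / N))) :=
            Finset.sum_congr rfl fun k _ => hrow k
        _ = _ := by
            rw [Finset.sum_add_distrib, ← Finset.sum_mul, ← Finset.sum_mul]
            ring
    by_cases hdvd : N ∣ n
    · obtain ⟨j, rfl⟩ := hdvd
      have hzc : ∀ k : ℕ, Real.cos (2 * π * ((N * j : ℕ):ℝ) * (z₂:ℝ) * k / N) = 1 := by
        intro k
        have harg : 2 * π * ((N * j : ℕ):ℝ) * (z₂:ℝ) * k / N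
            = ((j * z₂ * k : ℤ) : ℝ) * (2 * π) := by
          push_cast
          field_simp
        rw [harg, Real.cos_int_mul_two_pi]
      have hzs : ∀ k : ℕ, Real.sin (2 * π * ((N * j : ℕ):ℝ) * (z₂:ℝ) * k / N) = 0 := by
        intro k
        have harg : 2 * π * ((N * j : ℕ):ℝ) * (z₂:ℝ) * k / N
            = ((2 * (j * z₂ * k) : ℤ) : ℝ) * π := by
          push_cast
          field_simp
        rw [harg, Real.sin_int_mul_pi]
      rw [hfact, hsplit]
      have hC0 : (∑ k ∈ Finset.Icc 1 (N-1), (Int.fract ((z₁:ℝ) * k / N) - 1/2)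
          * Real.cos (2 * π * ((N * j : ℕ):ℝ) * (z₂:ℝ) * k / N)) = 0 := by
        rw [← hA0]
        refine Finset.sum_congr rfl fun k _ => ?_
        rw [hzc k, mul_one]
      have hS0 : (∑ k ∈ Finset.Icc 1 (N-1), (Int.fract ((z₁:ℝ) * k / N) - 1/2)
          * Real.sin (2 * π * ((N * j : ℕ):ℝ) * (z₂:ℝ) * k / N)) = 0 := by
        refine Finset.sum_eq_zero fun k _ => ?_
        rw [hzs k, mul_zero]
      rw [hC0, hS0, if_neg (by simp : ¬ (1 ≤ N * j ∧ ¬ N ∣ N * j))]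
      ring
    · have hEn := hE n hdvd
      have hCS : ((∑ k ∈ Finset.Icc 1 (N-1), (Int.fract ((z₁:ℝ) * k / N) - 1/2)
            * Real.cos (2 * π * n * (z₂:ℝ) * k / N) : ℝ) : ℂ)
          + ((∑ k ∈ Finset.Icc 1 (N-1), (Int.fract ((z₁:ℝ) * k / N) - 1/2)
            * Real.sin (2 * π * n * (z₂:ℝ) * k / N) : ℝ) : ℂ) * Complex.I
          = -(Complex.I / 2) * ((Real.cot (π * n * w / N) : ℝ) : ℂ) := by
        rw [← hEn, Complex.ofReal_sum, Complex.ofReal_sum, Finset.sum_mul,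
          ← Finset.sum_add_distrib]
        refine Finset.sum_congr rfl fun k hk => ?_
        rw [Complex.exp_mul_I, ← Complex.ofReal_cos, ← Complex.ofReal_sin]
        push_cast
        ring
      rw [Complex.ext_iff] at hCS
      obtain ⟨hre, him⟩ := hCS
      simp only [Complex.add_re, Complex.ofReal_re, Complex.mul_re, Complex.I_re,
        Complex.ofReal_im, Complex.I_im, Complex.add_im, Complex.mul_im, Complex.neg_re,
        Complex.neg_im, Complex.div_re, Complex.div_im, Complex.one_re, Complex.one_im] at hre him
      norm_num at hre him
      rw [hfact, hsplit, hre, him, if_pos ⟨hn1, hdvd⟩]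
      ring
  -- assemble via the Fourier expansion of B₂
  have hhs : HasSum (fun n : ℕ =>
      ∑ p ∈ (Finset.Icc 1 (N-1)) ×ˢ (Finset.Icc 1 (N-1)),
        ((Int.fract ((z₁:ℝ) * p.1 / N) - 1/2) * (Int.fract ((z₁:ℝ) * p.2 / N) - 1/2)) *
          (1 / (n:ℝ) ^ 2 * Real.cos (2 * π * n *
            Int.fract (((z₂ * ((p.1:ℤ) - (p.2:ℤ)) : ℤ) : ℝ) / N))))
      (∑ p ∈ (Finset.Icc 1 (N-1)) ×ˢ (Finset.Icc 1 (N-1)),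
        ((Int.fract ((z₁:ℝ) * p.1 / N) - 1/2) * (Int.fract ((z₁:ℝ) * p.2 / N) - 1/2)) *
          (π ^ 2 * (Int.fract (((z₂ * ((p.1:ℤ) - (p.2:ℤ)) : ℤ) : ℝ) / N) ^ 2
            - Int.fract (((z₂ * ((p.1:ℤ) - (p.2:ℤ)) : ℤ) : ℝ) / N) + 1/6))) := by
    refine hasSum_sum fun p hp => ?_
    have h := (hB2 (Int.fract (((z₂ * ((p.1:ℤ) - (p.2:ℤ)) : ℤ) : ℝ) / N))
      ⟨Int.fract_nonneg _, (Int.fract_lt_one _).le⟩).mul_left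
      ((Int.fract ((z₁:ℝ) * p.1 / N) - 1/2) * (Int.fract ((z₁:ℝ) * p.2 / N) - 1/2))
    exact h
  simp only [hpoint] at hhs
  have hdsum : (∑ p ∈ (Finset.Icc 1 (N-1)) ×ˢ (Finset.Icc 1 (N-1)),
      ((Int.fract ((z₁:ℝ) * p.1 / N) - 1/2) * (Int.fract ((z₁:ℝ) * p.2 / N) - 1/2)) *
        (π ^ 2 * (Int.fract (((z₂ * ((p.1:ℤ) - (p.2:ℤ)) : ℤ) : ℝ) / N) ^ 2
          - Int.fract (((z₂ * ((p.1:ℤ) - (p.2:ℤ)) : ℤ) : ℝ) / N) + 1/6)))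
      = π ^ 2 * ∑ k ∈ Finset.Icc 1 (N - 1), ∑ l ∈ Finset.Icc 1 (N - 1),
        (Int.fract ((z₁ : ℝ) * k / N) - 1 / 2) *
          (Int.fract ((z₁ : ℝ) * l / N) - 1 / 2) *
          (Int.fract (((z₂ * ((k : ℤ) - (l : ℤ)) : ℤ) : ℝ) / N) ^ 2
            - Int.fract (((z₂ * ((k : ℤ) - (l : ℤ)) : ℤ) : ℝ) / N) + 1 / 6) := by
    rw [Finset.sum_product, Finset.mul_sum]
    refine Finset.sum_congr rfl fun k _ => ?_
    rw [Finset.mul_sum]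
    refine Finset.sum_congr rfl fun l _ => ?_
    ring
  rw [hdsum] at hhs
  have hhs2 : HasSum (fun h : ℕ => if 1 ≤ h ∧ ¬ (N ∣ h) then
      Real.cot (π * h * w / N) ^ 2 / (h : ℝ) ^ 2 else 0)
      (4 * (π ^ 2 * ∑ k ∈ Finset.Icc 1 (N - 1), ∑ l ∈ Finset.Icc 1 (N - 1),
        (Int.fract ((z₁ : ℝ) * k / N) - 1 / 2) *
          (Int.fract ((z₁ : ℝ) * l / N) - 1 / 2) *
          (Int.fract (((z₂ * ((k : ℤ) - (l : ℤ)) : ℤ) : ℝ) / N) ^ 2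
            - Int.fract (((z₂ * ((k : ℤ) - (l : ℤ)) : ℤ) : ℝ) / N) + 1 / 6))) := by
    have h4 := hhs.mul_left 4
    have hfun : (fun n : ℕ => (4:ℝ) * ((1/4) * (if 1 ≤ n ∧ ¬ (N ∣ n) then
        Real.cot (π * n * w / N) ^ 2 / (n : ℝ) ^ 2 else 0)))
        = fun n : ℕ => (if 1 ≤ n ∧ ¬ (N ∣ n) then
        Real.cot (π * n * w / N) ^ 2 / (n : ℝ) ^ 2 else 0) := by
      funext n
      ring
    rwa [hfun] at h4
  refine ⟨hhs2.summable, ?_⟩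
  rw [hhs2.tsum_eq]
  rw [one_div (4 * π ^ 2), ← mul_assoc (4:ℝ), inv_mul_cancel_left₀ (by positivity)]
end

section
/- Let N ≥ 2, z ∈ ℤ with gcd(z, N) = 1, θ ∈ ℤ, and let z' ∈ ℤ satisfy z z' ≡ 1 (mod N). Then (1/N) ∑_{k=1}^{N−1} B₁({zk/N}) exp(2πi θ k/N) equals 0 if θ ≡ 0 (mod N), and equals (−i/(2N)) cot(π z' θ/N) otherwise. -/
open Real

section StmtAux
open Finset


private lemma exp_congr' (N : ℕ) (hN : 0 < N) {a b : ℤ} (h : a % (N:ℤ) = b % (N:ℤ)) :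
    Complex.exp (2*π*Complex.I*a/N) = Complex.exp (2*π*Complex.I*b/N) := by
  have hd : (N:ℤ) ∣ b - a := Int.ModEq.dvd h
  obtain ⟨t, ht⟩ := hd
  have hNC : (N:ℂ) ≠ 0 := by exact_mod_cast hN.ne'
  have ha : (a:ℂ) = b - N*t := by
    have h2 : a = b - N*t := by linarith
    exact_mod_cast congrArg (Int.cast : ℤ → ℂ) h2
  rw [show 2*π*Complex.I*(a:ℂ)/N = 2*π*Complex.I*b/N + (-t)*(2*π*Complex.I) by
    rw [ha]; field_simp; ring]
  have h1 : Complex.exp (((-t : ℤ):ℂ) * (2*π*Complex.I)) = 1 :=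
    Complex.exp_int_mul_two_pi_mul_I (-t)
  push_cast at h1
  rw [Complex.exp_add, h1, mul_one]

private lemma aux_sum (x : ℂ) (n : ℕ) :
    (x - 1) * ∑ j ∈ Finset.range n, (j:ℂ) * x^j
      = ((n:ℂ) - 1) * x^n - (∑ j ∈ Finset.range n, x^j - 1) := by
  induction n with
  | zero => simp
  | succ n ih =>
    rw [Finset.sum_range_succ, Finset.sum_range_succ, mul_add, ih]
    push_cast; ring

private lemma mem_aux {N : ℕ} (hN : 2 ≤ N) {w : ℤ} (hw : IsCoprime (N:ℤ) w)
    {k : ℕ} (hk : k ∈ Finset.Icc 1 (N-1)) :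
    ((w * k) % (N:ℤ)).toNat ∈ Finset.Icc 1 (N-1) := by
  simp only [Finset.mem_Icc] at hk ⊢
  have hN0 : (0:ℤ) < N := by exact_mod_cast Nat.lt_of_lt_of_le Nat.zero_lt_two hN
  have h0 : 0 ≤ (w*k) % (N:ℤ) := Int.emod_nonneg _ hN0.ne'
  have h1 : (w*k) % (N:ℤ) < N := Int.emod_lt_of_pos _ hN0
  have h2 : (w*k) % (N:ℤ) ≠ 0 := by
    intro h
    have hdvd : (N:ℤ) ∣ w * k := Int.dvd_of_emod_eq_zero h
    have hk' : (N:ℤ) ∣ (k:ℤ) := hw.dvd_of_dvd_mul_left hdvd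
    have hk1 : (0:ℤ) < k := by exact_mod_cast Nat.lt_of_lt_of_le Nat.zero_lt_one hk.1
    have := Int.le_of_dvd hk1 hk'
    omega
  omega

private lemma inv_aux {N : ℕ} (hN0 : 0 < N) {u v : ℤ}
    (huv : (u * v) % (N:ℤ) = 1 % (N:ℤ)) {k : ℕ} (hk : k ∈ Finset.Icc 1 (N-1)) :
    ((v * (((u * k) % (N:ℤ)).toNat : ℤ)) % (N:ℤ)).toNat = k := by
  simp only [Finset.mem_Icc] at hk
  have hNZ : (0:ℤ) < N := by exact_mod_cast hN0
  have h0 : 0 ≤ (u*k) % (N:ℤ) := Int.emod_nonneg _ hNZ.ne'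
  rw [Int.toNat_of_nonneg h0]
  have m1 : ((u*k) % (N:ℤ)) ≡ u*(k:ℤ) [ZMOD (N:ℤ)] := Int.emod_emod_of_dvd _ dvd_rfl
  have m2 : v * ((u*k) % (N:ℤ)) ≡ v*(u*k) [ZMOD (N:ℤ)] := m1.mul_left v
  have m3 : v*(u*(k:ℤ)) ≡ (k:ℤ) [ZMOD (N:ℤ)] := by
    have h := Int.ModEq.mul_right (k:ℤ) (show u*v ≡ 1 [ZMOD (N:ℤ)] from huv)
    have e : v*(u*(k:ℤ)) = u*v*k := by ring
    rw [e]
    simpa using h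
  have final : (v * ((u*k) % (N:ℤ))) % (N:ℤ) = (k:ℤ) % N := m2.trans m3
  have hkN : (k:ℤ) % N = k := Int.emod_eq_of_lt (by positivity) (by omega)
  rw [final, hkN]
  omega

private lemma term_aux {N : ℕ} (hN : 2 ≤ N) {z z' θ : ℤ}
    (hzz' : (z * z') % (N:ℤ) = 1 % (N:ℤ)) (k : ℕ) :
    ((Int.fract ((z : ℝ) * k / N) - 1 / 2 : ℝ) : ℂ) *
          Complex.exp (2 * (π : ℂ) * Complex.I * θ * k / N)
      = ((((z*k) % (N:ℤ)).toNat : ℂ)/N - 1/2) *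
          (Complex.exp (2*π*Complex.I*(θ*z')/N))^(((z*k) % (N:ℤ)).toNat) := by
  have hN0 : 0 < N := by omega
  have hNZ : (0:ℤ) < N := by exact_mod_cast hN0
  have hNR : (0:ℝ) < N := by exact_mod_cast hN0
  set j : ℕ := ((z*k) % (N:ℤ)).toNat with hjdef
  have h0 : 0 ≤ (z*k) % (N:ℤ) := Int.emod_nonneg _ hNZ.ne'
  have hj : (j:ℤ) = (z*k) % (N:ℤ) := Int.toNat_of_nonneg h0
  have hjlt : (j:ℤ) < N := by rw [hj]; exact Int.emod_lt_of_pos _ hNZ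
  have hq : (z*(k:ℤ)) = N * ((z*k)/N) + j := by rw [hj]; exact (Int.mul_ediv_add_emod _ _).symm
  have hfr : Int.fract ((z:ℝ) * k / N) = (j:ℝ)/N := by
    have hr : (z:ℝ) * k / N = ((z*(k:ℤ))/(N:ℤ) : ℤ) + (j:ℝ)/N := by
      have : ((z*(k:ℤ) : ℤ) : ℝ) = N * (((z*(k:ℤ))/(N:ℤ) : ℤ) : ℝ) + j := by
        exact_mod_cast congrArg (Int.cast : ℤ → ℝ) hq
      push_cast at this ⊢
      field_simp
      linarith
    rw [hr, Int.fract_intCast_add, Int.fract_eq_self.2]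
    constructor
    · positivity
    · rw [div_lt_one hNR]; exact_mod_cast hjlt
  have hmod : (θ*(k:ℤ)) % (N:ℤ) = (θ*z'*(j:ℤ)) % (N:ℤ) := by
    have base : ((z*(k:ℤ)) % (N:ℤ)) ≡ z*(k:ℤ) [ZMOD (N:ℤ)] :=
      Int.emod_emod_of_dvd _ dvd_rfl
    have m1 : (θ*z'*(j:ℤ)) ≡ θ*z'*(z*k) [ZMOD (N:ℤ)] := by
      rw [hj]; exact base.mul_left _
    have m2 : θ*z'*(z*(k:ℤ)) ≡ θ*(k:ℤ) [ZMOD (N:ℤ)] := by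
      have h := Int.ModEq.mul_right (θ*(k:ℤ)) (show z*z' ≡ 1 [ZMOD (N:ℤ)] from hzz')
      have e : θ*z'*(z*(k:ℤ)) = z*z'*(θ*k) := by ring
      rw [e]; simpa using h
    exact (m1.trans m2).symm
  have hex : Complex.exp (2 * (π:ℂ) * Complex.I * θ * k / N)
      = (Complex.exp (2*π*Complex.I*(θ*z')/N))^j := by
    rw [← Complex.exp_nat_mul]
    have e1 : (j:ℂ) * (2*π*Complex.I*(θ*z')/N) = 2*π*Complex.I*((θ*z'*(j:ℤ) : ℤ):ℂ)/N := by
      push_cast; ring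
    have e2 : 2 * (π:ℂ) * Complex.I * θ * k / N = 2*π*Complex.I*((θ*(k:ℤ) : ℤ):ℂ)/N := by
      push_cast; ring
    rw [e1, e2]
    exact exp_congr' N hN0 hmod
  rw [hfr, hex]
  push_cast
  ring

end StmtAux

/-- Let `N ≥ 2`, `z ∈ ℤ` with `gcd(z, N) = 1`, `θ ∈ ℤ`, and `z' ∈ ℤ` with
`z z' ≡ 1 (mod N)`. Then `(1/N) ∑_{k=1}^{N−1} B₁({zk/N}) exp(2πiθk/N)` equals `0` if
`θ ≡ 0 (mod N)`, and equals `(−i/(2N)) cot(πz'θ/N)` otherwise. -/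
theorem stmt8 (N : ℕ) (hN : 2 ≤ N) (z : ℤ) (hz : Int.gcd z N = 1)
    (θ : ℤ) (z' : ℤ) (hz' : z * z' ≡ 1 [ZMOD (N : ℤ)]) :
    (1 / (N : ℂ)) * ∑ k ∈ Finset.Icc 1 (N - 1),
        ((Int.fract ((z : ℝ) * k / N) - 1 / 2 : ℝ) : ℂ) *
          Complex.exp (2 * (π : ℂ) * Complex.I * θ * k / N)
      = if (N : ℤ) ∣ θ then 0
        else (-Complex.I / (2 * N)) * ((Real.cot (π * z' * θ / N) : ℝ) : ℂ) := by
  have hN0 : 0 < N := by omega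
  have hNZ : (0:ℤ) < N := by exact_mod_cast hN0
  have hNC : (N:ℂ) ≠ 0 := by exact_mod_cast hN0.ne'
  have hzz' : (z * z') % (N:ℤ) = 1 % (N:ℤ) := hz'
  have hcz : IsCoprime (N:ℤ) z := by
    rw [Int.isCoprime_iff_gcd_eq_one, Int.gcd_comm]; exact hz
  obtain ⟨t, ht⟩ : (N:ℤ) ∣ 1 - z*z' := Int.ModEq.dvd hz'
  have hcz' : IsCoprime (N:ℤ) z' := ⟨t, z, by linear_combination -ht⟩
  set c : ℂ := Complex.exp (2*π*Complex.I*(θ*z')/N) with hcdef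
  -- reindex the sum
  have hre : ∑ k ∈ Finset.Icc 1 (N - 1),
        ((Int.fract ((z : ℝ) * k / N) - 1 / 2 : ℝ) : ℂ) *
          Complex.exp (2 * (π : ℂ) * Complex.I * θ * k / N)
      = ∑ j ∈ Finset.Icc 1 (N-1), ((j:ℂ)/N - 1/2) * c^j := by
    refine Finset.sum_nbij' (fun k => ((z * k) % (N:ℤ)).toNat)
      (fun k => ((z' * k) % (N:ℤ)).toNat) ?_ ?_ ?_ ?_ ?_
    · intro k hk; exact mem_aux hN hcz hk
    · intro k hk; exact mem_aux hN hcz' hk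
    · intro k hk; exact inv_aux hN0 hzz' hk
    · intro k hk
      have hzz'' : (z' * z) % (N:ℤ) = 1 % (N:ℤ) := by rwa [mul_comm] at hzz'
      exact inv_aux hN0 hzz'' hk
    · intro k hk; exact term_aux hN hzz' k
  rw [hre]
  -- relate Icc sum to range sum
  have hins : insert 0 (Finset.Icc 1 (N-1)) = Finset.range N := by
    ext x; simp only [Finset.mem_insert, Finset.mem_Icc, Finset.mem_range]; omega
  have h0notin : (0:ℕ) ∉ Finset.Icc 1 (N-1) := by simp
  have hsplit : ∀ g : ℕ → ℂ, ∑ j ∈ Finset.range N, g j = g 0 + ∑ j ∈ Finset.Icc 1 (N-1), g j := by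
    intro g; rw [← hins, Finset.sum_insert h0notin]
  have hsplit' : ∑ j ∈ Finset.Icc 1 (N-1), ((j:ℂ)/N - 1/2) * c^j
      = ∑ j ∈ Finset.range N, ((j:ℂ)/N - 1/2) * c^j + 1/2 := by
    rw [hsplit (fun j => ((j:ℂ)/N - 1/2) * c^j)]
    simp
  rw [hsplit']
  split_ifs with hθ
  · -- N ∣ θ : c = 1
    have hc1 : c = 1 := by
      have hm : (θ*z') % (N:ℤ) = (0:ℤ) % (N:ℤ) := by
        simp [Int.emod_eq_zero_of_dvd (Dvd.dvd.mul_right hθ z')]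
      have := exp_congr' N hN0 hm
      simpa [hcdef] using this
    rw [hc1]
    simp only [one_pow, mul_one]
    have hsum1 : ∑ j ∈ Finset.range N, ((j:ℂ)/N - 1/2) = (∑ j ∈ Finset.range N, (j:ℂ))/N - N/2 := by
      rw [Finset.sum_sub_distrib, ← Finset.sum_div, Finset.sum_const, Finset.card_range]
      push_cast; ring
    have hgauss : (∑ j ∈ Finset.range N, (j:ℂ)) = (N:ℂ)*((N:ℂ)-1)/2 := by
      have h2 : (∑ j ∈ Finset.range N, j) * 2 = N * (N-1) := Finset.sum_range_id_mul_two N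
      have h3 := congrArg (Nat.cast : ℕ → ℂ) h2
      push_cast [Nat.cast_sub (show 1 ≤ N by omega)] at h3
      linear_combination h3/2
    rw [hsum1, hgauss]
    field_simp
    ring
  · -- N ∤ θ
    have hcN : c^N = 1 := by
      rw [hcdef, ← Complex.exp_nat_mul]
      have e : (N:ℂ) * (2*π*Complex.I*(θ*z')/N) = ((θ*z' : ℤ):ℂ) * (2*π*Complex.I) := by
        push_cast; field_simp
      rw [e, Complex.exp_int_mul_two_pi_mul_I]
    have hc1 : c ≠ 1 := by
      intro h
      rw [hcdef, Complex.exp_eq_one_iff] at h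
      obtain ⟨n, hn⟩ := h
      have hπ : (π:ℂ) ≠ 0 := by exact_mod_cast Real.pi_ne_zero
      have hI : Complex.I ≠ 0 := Complex.I_ne_zero
      have h2πI : 2*(π:ℂ)*Complex.I ≠ 0 := by
        exact mul_ne_zero (mul_ne_zero two_ne_zero hπ) hI
      have h2 : ((θ*z' : ℤ):ℂ) = ((n*N : ℤ):ℂ) := by
        push_cast
        field_simp at hn
        have h4 : (2*(π:ℂ)*Complex.I) * ((θ:ℂ)*z') = (2*(π:ℂ)*Complex.I) * ((n:ℂ)*N) := by
          linear_combination (2*(π:ℂ)*Complex.I) * hn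
        exact mul_left_cancel₀ h2πI h4
      have h3 : (θ*z' : ℤ) = n*N := by exact_mod_cast h2
      have hd : (N:ℤ) ∣ θ*z' := ⟨n, by linarith [h3]⟩
      exact hθ (hcz'.dvd_of_dvd_mul_right hd)
    have hc0 : c - 1 ≠ 0 := sub_ne_zero.2 hc1
    have hgeo : ∑ j ∈ Finset.range N, c^j = 0 := by
      rw [geom_sum_eq hc1, hcN]; simp
    have hjsum : ∑ j ∈ Finset.range N, (j:ℂ)*c^j = N/(c-1) := by
      have h := aux_sum c N
      rw [hcN, hgeo] at h
      rw [eq_div_iff hc0]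
      linear_combination h
    have hrange : ∑ j ∈ Finset.range N, ((j:ℂ)/N - 1/2) * c^j = 1/(c-1) := by
      have hterm : ∀ j ∈ Finset.range N, ((j:ℂ)/N - 1/2) * c^j = ((j:ℂ)*c^j)/N - (1/2)*c^j := by
        intro j _; ring
      rw [Finset.sum_congr rfl hterm, Finset.sum_sub_distrib, ← Finset.sum_div, ← Finset.mul_sum,
        hjsum, hgeo]
      field_simp
      ring
    rw [hrange]
    -- RHS with cotangent
    rw [Real.cot_eq_cos_div_sin]
    set x : ℝ := π * z' * θ / N with hx
    set w : ℂ := Complex.exp ((x:ℂ) * Complex.I) with hw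
    have hw0 : w ≠ 0 := Complex.exp_ne_zero _
    have hcw : c = w^2 := by
      rw [hcdef, hw, sq, ← Complex.exp_add]
      congr 1
      rw [hx]; push_cast; field_simp; ring
    have hwinv : Complex.exp (-(x:ℂ) * Complex.I) = w⁻¹ := by
      rw [hw, ← Complex.exp_neg]; congr 1; ring
    have hcos : Complex.cos (x:ℂ) = (w + w⁻¹)/2 := by
      rw [show Complex.cos (x:ℂ)
          = (Complex.exp ((x:ℂ)*Complex.I) + Complex.exp (-(x:ℂ)*Complex.I))/2 from rfl,
        hwinv, hw]
    have hsin : Complex.sin (x:ℂ) = (w⁻¹ - w)*Complex.I/2 := by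
      rw [show Complex.sin (x:ℂ)
          = (Complex.exp (-(x:ℂ)*Complex.I) - Complex.exp ((x:ℂ)*Complex.I))*Complex.I/2 from rfl,
        hwinv, hw]
    have hcast : ((Real.cos x / Real.sin x : ℝ) : ℂ) = Complex.cos (x:ℂ) / Complex.sin (x:ℂ) := by
      push_cast
      rfl
    have hw2 : w^2 - 1 ≠ 0 := by rw [← hcw]; exact hc0
    have e1 : w⁻¹ - w = (1 - w^2)/w := by
      rw [eq_div_iff hw0, sub_mul, inv_mul_cancel₀ hw0]; ring
    have e2 : w + w⁻¹ = (w^2 + 1)/w := by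
      rw [eq_div_iff hw0, add_mul, inv_mul_cancel₀ hw0]; ring
    have h1mw : (1:ℂ) - w^2 ≠ 0 := by intro h; apply hw2; linear_combination -h
    have hI : Complex.I ≠ 0 := Complex.I_ne_zero
    rw [hcast, hcos, hsin, hcw, e1, e2]
    field_simp
    ring
end

section
/- Let N ≥ 3 and let w ∈ ℤ with gcd(w, N) = 1. Then (1/N²) ∑_{h=1}^{N−1} cot²(π h w/N)/h² > 1/(6N²); equivalently ∑_{h=1}^{N−1} cot²(π h w/N)/h² > 1/6. -/
open Real

private lemma cot_add_int_mul_pi' (x : ℝ) (n : ℤ) : Real.cot (x + n * π) = Real.cot x := by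
  rw [Real.cot_eq_cos_div_sin, Real.cot_eq_cos_div_sin, Real.cos_add_int_mul_pi,
    Real.sin_add_int_mul_pi, mul_div_mul_left _ _ (by positivity : ((-1:ℝ)) ^ n ≠ 0)]

private lemma cot_neg' (x : ℝ) : Real.cot (-x) = - Real.cot x := by
  rw [Real.cot_eq_cos_div_sin, Real.cot_eq_cos_div_sin, Real.cos_neg, Real.sin_neg, div_neg]

private lemma exists_inv (N : ℕ) (hN : 3 ≤ N) (w : ℤ) (hw : Int.gcd w N = 1) :
    ∃ h0 : ℕ, 1 ≤ h0 ∧ h0 ≤ N - 1 ∧ 2 * h0 ≠ N ∧ ∃ k : ℤ, (h0 : ℤ) * w = 1 + N * k := by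
  obtain ⟨u, v, huv⟩ := (Int.isCoprime_iff_gcd_eq_one.mpr hw)
  have hNpos : (0:ℤ) < N := by exact_mod_cast Nat.lt_of_lt_of_le (by norm_num) hN
  obtain ⟨c, hc⟩ : (N:ℤ) ∣ u - u % N := ⟨u / N, by rw [Int.emod_def]; ring⟩
  have ha0 : 0 ≤ u % N := Int.emod_nonneg u (by omega)
  have haN : u % N < N := Int.emod_lt_of_pos u hNpos
  have hk : (u % N) * w = 1 + N * (-(v + c * w)) := by linear_combination huv - w * hc
  refine ⟨(u % N).toNat, ?_, ?_, ?_, ⟨-(v + c * w), ?_⟩⟩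
  · have : u % N ≠ 0 := by
      intro h
      rw [h, zero_mul] at hk
      have hd1 : (N:ℤ) ∣ 1 := ⟨v + c * w, by linarith⟩
      have := Int.eq_one_of_dvd_one hNpos.le hd1
      omega
    omega
  · omega
  · intro h
    have h2 : (N:ℤ) = 2 * (u % N) := by omega
    have hd : (u % N) ∣ 1 := ⟨w - 2 * (-(v + c * w)),
      by linear_combination (-1) * hk + (v + c * w) * h2⟩
    have := Int.eq_one_of_dvd_one ha0 hd
    omega
  · rw [Int.toNat_of_nonneg ha0]; exact hk

set_option maxHeartbeats 1000000 in
/-- Let `N ≥ 3` and `w ∈ ℤ` with `gcd(w, N) = 1`. Then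
`(1/N²) ∑_{h=1}^{N−1} cot²(πhw/N)/h² > 1/(6N²)`; equivalently
`∑_{h=1}^{N−1} cot²(πhw/N)/h² > 1/6`. -/
theorem stmt11 (N : ℕ) (hN : 3 ≤ N) (w : ℤ) (hw : Int.gcd w N = 1) :
    (1 / (N : ℝ) ^ 2) * ∑ h ∈ Finset.Icc 1 (N - 1),
        Real.cot (π * h * w / N) ^ 2 / (h : ℝ) ^ 2 > 1 / (6 * (N : ℝ) ^ 2) ∧
    ∑ h ∈ Finset.Icc 1 (N - 1),
        Real.cot (π * h * w / N) ^ 2 / (h : ℝ) ^ 2 > 1 / 6 := by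
  obtain ⟨h0, h01, h0N, hnmid, k, hk0⟩ := exists_inv N hN w hw
  have hNR : (0:ℝ) < N := by exact_mod_cast Nat.lt_of_lt_of_le (by norm_num) hN
  have h11 : 1 ≤ N - h0 := by omega
  have h1N : N - h0 ≤ N - 1 := by omega
  have hne : h0 ≠ N - h0 := by omega
  have hk1 : ((N - h0 : ℕ) : ℤ) * w = -1 + N * (w - k) := by
    have : ((N - h0 : ℕ) : ℤ) = N - h0 := by omega
    rw [this]; linarith [hk0]
  -- angle computations
  have hang0 : π * h0 * w / N = π / N + (k : ℝ) * π := by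
    have h : ((h0:ℝ)) * w = 1 + N * k := by exact_mod_cast hk0
    field_simp
    linear_combination h
  have hang1 : π * (N - h0 : ℕ) * w / N = -(π / N) + ((w - k : ℤ) : ℝ) * π := by
    have h : (((N - h0 : ℕ)):ℝ) * w = -1 + N * ((w:ℝ) - k) := by exact_mod_cast hk1
    field_simp
    push_cast
    linear_combination h
  have hc0 : Real.cot (π * h0 * w / N) ^ 2 = Real.cot (π / N) ^ 2 := by
    rw [hang0, show ((k:ℝ) * π) = ((k:ℤ):ℝ) * π by norm_num, cot_add_int_mul_pi']
  have hc1 : Real.cot (π * (N - h0 : ℕ) * w / N) ^ 2 = Real.cot (π / N) ^ 2 := by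
    rw [hang1, cot_add_int_mul_pi', cot_neg']
    ring
  -- cot(π/N) lower bound
  have hx0 : 0 < π / N := by positivity
  have hx3 : π / N ≤ π / 3 := by
    apply div_le_div_of_nonneg_left Real.pi_pos.le (by norm_num)
    exact_mod_cast hN
  have hxpi : π / N < π := lt_of_le_of_lt hx3 (by linarith [Real.pi_pos])
  have hsinpos : 0 < Real.sin (π / N) := Real.sin_pos_of_pos_of_lt_pi hx0 hxpi
  have hsinle : Real.sin (π / N) ≤ π / N := Real.sin_le hx0.le
  have hcosge : (1:ℝ)/2 ≤ Real.cos (π / N) := by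
    rw [← Real.cos_pi_div_three]
    exact Real.cos_le_cos_of_nonneg_of_le_pi hx0.le (by linarith [Real.pi_pos]) hx3
  have hcge : (N:ℝ) / (2 * π) ≤ Real.cot (π / N) := by
    rw [Real.cot_eq_cos_div_sin]
    have h2 : (1:ℝ)/2 / (π / N) ≤ Real.cos (π / N) / Real.sin (π / N) :=
      div_le_div₀ (by linarith) hcosge hsinpos hsinle
    calc (N:ℝ) / (2 * π) = (1:ℝ)/2 / (π / N) := by
          rw [div_div_eq_mul_div]
          rw [eq_div_iff (by positivity)]
          field_simp
      _ ≤ _ := h2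
  -- the two distinguished terms dominate
  have hsub : ({h0, N - h0} : Finset ℕ) ⊆ Finset.Icc 1 (N - 1) := by
    intro x hx
    simp only [Finset.mem_insert, Finset.mem_singleton] at hx
    rcases hx with h | h <;> subst h <;> rw [Finset.mem_Icc] <;> omega
  have hpair :
      Real.cot (π * h0 * w / N) ^ 2 / (h0 : ℝ) ^ 2
        + Real.cot (π * (N - h0 : ℕ) * w / N) ^ 2 / ((N - h0 : ℕ) : ℝ) ^ 2
      ≤ ∑ h ∈ Finset.Icc 1 (N - 1), Real.cot (π * h * w / N) ^ 2 / (h : ℝ) ^ 2 := by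
    have := Finset.sum_le_sum_of_subset_of_nonneg hsub
      (f := fun h : ℕ => Real.cot (π * h * w / N) ^ 2 / (h : ℝ) ^ 2)
      (fun i _ _ => by positivity)
    rwa [Finset.sum_pair hne] at this
  have hh0R : (1:ℝ) ≤ h0 := by exact_mod_cast h01
  have hh1R : (1:ℝ) ≤ ((N - h0 : ℕ) : ℝ) := by exact_mod_cast h11
  have hsum : (h0:ℝ) + ((N - h0 : ℕ) : ℝ) = N := by
    have : h0 + (N - h0) = N := by omega
    exact_mod_cast this
  have e2 : 8 / (N:ℝ)^2 ≤ 1 / (h0:ℝ)^2 + 1 / ((N - h0 : ℕ):ℝ)^2 := by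
    have ha : (0:ℝ) < h0 := by linarith
    have hb : (0:ℝ) < ((N - h0 : ℕ):ℝ) := by linarith
    rw [div_add_div _ _ (by positivity) (by positivity),
      div_le_div_iff₀ (by positivity) (by positivity), ← hsum]
    nlinarith [mul_nonneg (sq_nonneg ((h0:ℝ) - ((N - h0 : ℕ):ℝ)))
      (by positivity : (0:ℝ) ≤ (h0:ℝ)^2 + 4 * ((h0:ℝ) * ((N - h0 : ℕ):ℝ)) + ((N - h0 : ℕ):ℝ)^2)]
  have hmain : (1:ℝ)/6 <
      Real.cot (π * h0 * w / N) ^ 2 / (h0 : ℝ) ^ 2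
        + Real.cot (π * (N - h0 : ℕ) * w / N) ^ 2 / ((N - h0 : ℕ) : ℝ) ^ 2 := by
    rw [hc0, hc1]
    have hfv : Real.cot (π / N) ^ 2 / (h0 : ℝ) ^ 2 + Real.cot (π / N) ^ 2 / ((N - h0 : ℕ) : ℝ) ^ 2
        = Real.cot (π / N) ^ 2 * (1 / (h0:ℝ)^2 + 1 / ((N - h0 : ℕ):ℝ)^2) := by ring
    rw [hfv]
    have e1 : ((N:ℝ) / (2*π))^2 ≤ Real.cot (π / N) ^ 2 :=
      pow_le_pow_left₀ (by positivity) hcge 2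
    have hmm : ((N:ℝ)/(2*π))^2 * (8 / (N:ℝ)^2)
        ≤ Real.cot (π / N) ^ 2 * (1 / (h0:ℝ)^2 + 1 / ((N - h0 : ℕ):ℝ)^2) :=
      mul_le_mul e1 e2 (by positivity) (by positivity)
    have heq : ((N:ℝ)/(2*π))^2 * (8 / (N:ℝ)^2) = 2 / π^2 := by
      field_simp
      ring
    have hfin : (1:ℝ)/6 < 2 / π^2 := by
      rw [div_lt_div_iff₀ (by norm_num) (by positivity)]
      nlinarith [Real.pi_lt_d2]
    calc (1:ℝ)/6 < 2/π^2 := hfin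
      _ = _ := heq.symm
      _ ≤ _ := hmm
  have hS : (1:ℝ)/6 < ∑ h ∈ Finset.Icc 1 (N - 1),
      Real.cot (π * h * w / N) ^ 2 / (h : ℝ) ^ 2 := lt_of_lt_of_le hmain hpair
  refine ⟨?_, hS⟩
  have hm := mul_lt_mul_of_pos_left hS (show (0:ℝ) < 1 / (N:ℝ)^2 by positivity)
  calc (1:ℝ) / (6 * (N:ℝ)^2) = 1/(N:ℝ)^2 * (1/6) := by ring
    _ < _ := hm
end

section
/- Let N ≥ 3 be a prime. Then (1/(N−1)) ∑_{w=1}^{N−1} (1/N) ∑_{h=1}^{N−1} |cot(π h w/N)|/h ≤ (H_{N−1}/N) · (6/π) · log N, where H_{N−1} = ∑_{h=1}^{N−1} 1/h. -/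
open Real

private lemma cot_periodic' : Function.Periodic Real.cot π := by
  intro x
  rw [Real.cot_eq_cos_div_sin, Real.cot_eq_cos_div_sin, Real.sin_add_pi, Real.cos_add_pi,
    neg_div_neg_eq]

private lemma abs_cot_le_half (x : ℝ) (hx : 0 < x) (hx2 : x ≤ π / 2) :
    |Real.cot x| ≤ 1 / x := by
  rcases lt_or_eq_of_le hx2 with h | h
  · have hsin : 0 < Real.sin x := Real.sin_pos_of_pos_of_lt_pi hx (by linarith [Real.pi_pos])
    have hcos : 0 < Real.cos x := Real.cos_pos_of_mem_Ioo ⟨by linarith [Real.pi_pos], h⟩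
    have htan : x < Real.tan x := Real.lt_tan hx h
    rw [Real.tan_eq_sin_div_cos, lt_div_iff₀ hcos] at htan
    have hle : Real.cot x ≤ 1 / x := by
      rw [Real.cot_eq_cos_div_sin, div_le_div_iff₀ hsin hx]
      nlinarith
    have hnn : 0 ≤ Real.cot x := by
      rw [Real.cot_eq_cos_div_sin]
      positivity
    rwa [abs_of_nonneg hnn]
  · rw [h, Real.cot_eq_cos_div_sin, Real.cos_pi_div_two, zero_div, abs_zero]
    positivity

private lemma abs_cot_le (x : ℝ) (hx : 0 < x) (hx2 : x < π) :
    |Real.cot x| ≤ 1 / x + 1 / (π - x) := by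
  have hπ := Real.pi_pos
  have h1 : (0:ℝ) < 1 / x := by positivity
  have h2 : (0:ℝ) < 1 / (π - x) := by
    have : 0 < π - x := by linarith
    positivity
  rcases le_or_gt x (π / 2) with h | h
  · linarith [abs_cot_le_half x hx h]
  · have key : |Real.cot (π - x)| ≤ 1 / (π - x) :=
      abs_cot_le_half (π - x) (by linarith) (by linarith)
    have heq : Real.cot (π - x) = -Real.cot x := by
      rw [Real.cot_eq_cos_div_sin, Real.cot_eq_cos_div_sin, Real.cos_pi_sub, Real.sin_pi_sub,
        neg_div]
    rw [heq, abs_neg] at key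
    linarith

/-- Let `N ≥ 3` be a prime. Then
`(1/(N−1)) ∑_{w=1}^{N−1} (1/N) ∑_{h=1}^{N−1} |cot(πhw/N)|/h ≤ (H_{N−1}/N)·(6/π)·log N`,
where `H_{N−1} = ∑_{h=1}^{N−1} 1/h`. -/
theorem stmt13 (N : ℕ) (hp : N.Prime) (hN : 3 ≤ N) :
    (1 / ((N : ℝ) - 1)) * ∑ w ∈ Finset.Icc 1 (N - 1), (1 / (N : ℝ)) *
        ∑ h ∈ Finset.Icc 1 (N - 1), |Real.cot (π * h * w / N)| / (h : ℝ)
      ≤ ((∑ h ∈ Finset.Icc 1 (N - 1), (1 : ℝ) / h) / N) * (6 / π) * Real.log N := by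
  have hπ := Real.pi_pos
  have hN0 : 0 < N := by omega
  have hNR : (0:ℝ) < N := by exact_mod_cast hN0
  have hNR3 : (3:ℝ) ≤ N := by exact_mod_cast hN
  have hNne : (N:ℝ) ≠ 0 := ne_of_gt hNR
  set H : ℝ := ∑ h ∈ Finset.Icc 1 (N - 1), (1 : ℝ) / h with hH
  set C : ℝ := ∑ k ∈ Finset.Icc 1 (N - 1), |Real.cot (π * k / N)| with hC
  have hHnn : 0 ≤ H := Finset.sum_nonneg fun h _ => by positivity
  have hCnn : 0 ≤ C := Finset.sum_nonneg fun k _ => abs_nonneg _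
  -- Step 1: per-h bound via w ↦ h*w % N
  have key : ∀ h ∈ Finset.Icc 1 (N - 1),
      ∑ w ∈ Finset.Icc 1 (N - 1), |Real.cot (π * h * w / N)| ≤ C := by
    intro h hh
    rw [Finset.mem_Icc] at hh
    have hcop : Nat.Coprime N h := by
      have hnd : ¬ N ∣ h := fun hdvd => by
        have := Nat.le_of_dvd (by omega) hdvd; omega
      exact hp.coprime_iff_not_dvd.mpr hnd
    have hterm : ∀ w ∈ Finset.Icc 1 (N - 1),
        |Real.cot (π * h * w / N)| = |Real.cot (π * (((h * w) % N : ℕ) : ℝ) / N)| := by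
      intro w hw
      have hdm : h * w = N * (h * w / N) + h * w % N := (Nat.div_add_mod _ _).symm
      have hcast : (h:ℝ) * w = N * (h * w / N : ℕ) + ((h * w) % N : ℕ) := by
        exact_mod_cast congrArg (Nat.cast : ℕ → ℝ) hdm
      have heq : π * h * w / N = π * (((h * w) % N : ℕ) : ℝ) / N + (h * w / N : ℕ) * π := by
        field_simp
        linear_combination hcast
      rw [heq, (cot_periodic'.nat_mul (h * w / N)) _]
    rw [Finset.sum_congr rfl hterm]
    have hinj : ∀ w₁ ∈ Finset.Icc 1 (N - 1), ∀ w₂ ∈ Finset.Icc 1 (N - 1),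
        (h * w₁) % N = (h * w₂) % N → w₁ = w₂ := by
      intro w₁ hw₁ w₂ hw₂ heq
      rw [Finset.mem_Icc] at hw₁ hw₂
      have hmod : w₁ ≡ w₂ [MOD N] :=
        Nat.ModEq.cancel_left_of_coprime (by simpa [Nat.Coprime, Nat.gcd_comm] using hcop) heq
      exact hmod.eq_of_lt_of_lt (by omega) (by omega)
    calc ∑ w ∈ Finset.Icc 1 (N - 1), |Real.cot (π * (((h * w) % N : ℕ) : ℝ) / N)|
        = ∑ k ∈ (Finset.Icc 1 (N - 1)).image (fun w => (h * w) % N),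
            |Real.cot (π * k / N)| :=
              (Finset.sum_image (f := fun k : ℕ => |Real.cot (π * (k:ℝ) / N)|) hinj).symm
      _ ≤ C := by
          apply Finset.sum_le_sum_of_subset_of_nonneg
          · intro k hk
            simp only [Finset.mem_image] at hk
            obtain ⟨w, hw, rfl⟩ := hk
            rw [Finset.mem_Icc] at hw ⊢
            have hlt : (h * w) % N < N := Nat.mod_lt _ hN0
            have hne : (h * w) % N ≠ 0 := by
              intro h0
              have hdvd : N ∣ h * w := Nat.dvd_of_mod_eq_zero h0
              rcases hp.dvd_mul.mp hdvd with hd | hd <;>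
                (have := Nat.le_of_dvd (by omega) hd; omega)
            omega
          · intro _ _ _; positivity
  -- Step 2: C ≤ (2N/π) H
  have hrefl : ∑ k ∈ Finset.Icc 1 (N - 1), (1:ℝ) / ((N - k : ℕ) : ℝ) = H := by
    rw [hH]
    apply Finset.sum_nbij' (i := fun k => N - k) (j := fun k => N - k)
    · intro a ha; rw [Finset.mem_Icc] at ha ⊢; omega
    · intro a ha; rw [Finset.mem_Icc] at ha ⊢; omega
    · intro a ha; rw [Finset.mem_Icc] at ha; omega
    · intro a ha; rw [Finset.mem_Icc] at ha; omega
    · intro a ha; rfl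
  have hCle : C ≤ 2 * N / π * H := by
    have hstep : ∀ k ∈ Finset.Icc 1 (N - 1),
        |Real.cot (π * k / N)| ≤ N / π * (1 / k) + N / π * (1 / ((N - k : ℕ) : ℝ)) := by
      intro k hk
      rw [Finset.mem_Icc] at hk
      have hk1 : (1:ℝ) ≤ k := by exact_mod_cast hk.1
      have hkN : (k:ℝ) ≤ (N:ℝ) - 1 := by
        have h2 : (k:ℝ) ≤ ((N - 1 : ℕ) : ℝ) := by exact_mod_cast hk.2
        rwa [Nat.cast_sub (by omega), Nat.cast_one] at h2
      have hNk : ((N - k : ℕ) : ℝ) = (N:ℝ) - k := by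
        rw [Nat.cast_sub (by omega)]
      have hposk : (0:ℝ) < k := by linarith
      have hpos : (0:ℝ) < (N:ℝ) - k := by linarith
      have hx : 0 < π * k / N := by positivity
      have hx2 : π * k / N < π := by
        rw [div_lt_iff₀ hNR]; nlinarith
      have hb := abs_cot_le _ hx hx2
      have e1 : 1 / (π * (k:ℝ) / N) = N / π * (1 / k) := by
        field_simp
      have e2 : 1 / (π - π * (k:ℝ) / N) = N / π * (1 / ((N:ℝ) - k)) := by
        rw [show π - π * (k:ℝ) / N = π * ((N:ℝ) - k) / N by field_simp]
        field_simp
      rw [e1, e2, ← hNk] at hb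
      exact hb
    calc C ≤ ∑ k ∈ Finset.Icc 1 (N - 1),
          (N / π * (1 / k) + N / π * (1 / ((N - k : ℕ) : ℝ))) := Finset.sum_le_sum hstep
      _ = N / π * H + N / π * H := by
          rw [Finset.sum_add_distrib, ← Finset.mul_sum, ← Finset.mul_sum, hrefl, hH]
      _ = 2 * N / π * H := by ring
  -- Step 3: harmonic bound
  have hlog1 : (1:ℝ) ≤ Real.log N := by
    rw [Real.le_log_iff_exp_le hNR]
    calc Real.exp 1 ≤ 2.7182818286 := (Real.exp_one_lt_d9).le
      _ ≤ N := by linarith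
  have hHle : H ≤ 2 * Real.log N := by
    have h1 : (harmonic (N - 1) : ℝ) ≤ 1 + Real.log (N - 1 : ℕ) := harmonic_le_one_add_log _
    have h2 : H = (harmonic (N - 1) : ℝ) := by
      rw [hH, harmonic_eq_sum_Icc]
      push_cast
      simp [one_div]
    have h3 : Real.log ((N - 1 : ℕ) : ℝ) ≤ Real.log N := by
      apply Real.log_le_log (by exact_mod_cast (by omega : 0 < N - 1))
      exact_mod_cast Nat.sub_le N 1
    linarith
  -- Step 4: put it together
  have hT : ∑ w ∈ Finset.Icc 1 (N - 1), ∑ h ∈ Finset.Icc 1 (N - 1),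
      |Real.cot (π * h * w / N)| / (h : ℝ) ≤ C * H := by
    rw [Finset.sum_comm]
    calc ∑ h ∈ Finset.Icc 1 (N - 1), ∑ w ∈ Finset.Icc 1 (N - 1),
          |Real.cot (π * h * w / N)| / (h : ℝ)
        ≤ ∑ h ∈ Finset.Icc 1 (N - 1), C * (1 / h) := by
          apply Finset.sum_le_sum
          intro h hh
          have hh' := hh
          rw [Finset.mem_Icc] at hh'
          have hhpos : (0:ℝ) < h := by exact_mod_cast hh'.1
          rw [← Finset.sum_div, mul_one_div]
          gcongr
          exact key h hh
      _ = C * H := by rw [hH, Finset.mul_sum]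
  have hsum1 : ∑ w ∈ Finset.Icc 1 (N - 1), (1 / (N : ℝ)) *
      ∑ h ∈ Finset.Icc 1 (N - 1), |Real.cot (π * h * w / N)| / (h : ℝ)
      = (1 / (N:ℝ)) * ∑ w ∈ Finset.Icc 1 (N - 1), ∑ h ∈ Finset.Icc 1 (N - 1),
          |Real.cot (π * h * w / N)| / (h : ℝ) := (Finset.mul_sum _ _ _).symm
  rw [hsum1]
  have hN1 : (0:ℝ) < (N:ℝ) - 1 := by linarith
  calc (1 / ((N : ℝ) - 1)) * ((1 / (N:ℝ)) * ∑ w ∈ Finset.Icc 1 (N - 1),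
        ∑ h ∈ Finset.Icc 1 (N - 1), |Real.cot (π * h * w / N)| / (h : ℝ))
      ≤ (1 / ((N : ℝ) - 1)) * ((1 / (N:ℝ)) * (C * H)) := by
        apply mul_le_mul_of_nonneg_left _ (by positivity)
        exact mul_le_mul_of_nonneg_left hT (by positivity)
    _ = (H / N) * (C / ((N:ℝ) - 1)) := by field_simp
    _ ≤ (H / N) * (6 / π * Real.log N) := by
        apply mul_le_mul_of_nonneg_left _ (by positivity)
        rw [div_le_iff₀ hN1]
        have hlogpos : (0:ℝ) < Real.log N := by linarith
        have h4 : C ≤ 2 * N / π * (2 * Real.log N) := by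
          calc C ≤ 2 * N / π * H := hCle
            _ ≤ 2 * N / π * (2 * Real.log N) :=
                mul_le_mul_of_nonneg_left hHle (by positivity)
        have h5 : 2 * (N:ℝ) / π * (2 * Real.log N) = 4 * N * Real.log N / π := by ring
        have h6 : 6 / π * Real.log N * ((N:ℝ) - 1) = 6 * Real.log N * ((N:ℝ) - 1) / π := by
          ring
        rw [h6]
        rw [h5] at h4
        refine h4.trans ((div_le_div_iff_of_pos_right hπ).mpr ?_)
        nlinarith [mul_nonneg hlogpos.le (by linarith : (0:ℝ) ≤ 2 * (N:ℝ) - 6)]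
    _ = (H / N) * (6 / π) * Real.log N := by ring
end

section
/- Let F_n denote the Fibonacci numbers (F_0 = 0, F_1 = 1, F_n = F_{n−1} + F_{n−2}), let k ≥ 3, z = F_{k−1} and N = F_k. Then gcd(z, N) = 1, and for any z' ∈ ℤ with z z' ≡ 1 (mod N): ∑_{m,ℓ=1}^{N−1} B₁(m/N) B₂(((z(m−ℓ)) mod N)/N) B₁(ℓ/N) = ∑_{m,ℓ=1}^{N−1} B₁(m/N) B₂(((z'(m−ℓ)) mod N)/N) B₁(ℓ/N). -/
/-- `B₁(t) = t − 1/2`, the Bernoulli polynomial of degree 1. -/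
noncomputable def bern1 (t : ℝ) : ℝ := t - 1 / 2

/-- `B₂(t) = t² − t + 1/6`, the Bernoulli polynomial of degree 2. -/
noncomputable def bern2 (t : ℝ) : ℝ := t ^ 2 - t + 1 / 6

/-- Cassini's identity over ℤ. -/
lemma cassini (n : ℕ) : (Nat.fib (n + 1) : ℤ) ^ 2 - Nat.fib (n + 2) * Nat.fib n = (-1) ^ n := by
  induction n with
  | zero => simp
  | succ n ih =>
    have h : (Nat.fib (n + 3) : ℤ) = Nat.fib (n + 2) + Nat.fib (n + 1) := by
      have := Nat.fib_add_two (n := n + 1)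
      push_cast [this]; ring
    have h2 : (Nat.fib (n + 2) : ℤ) = Nat.fib (n + 1) + Nat.fib n := by
      have := Nat.fib_add_two (n := n)
      push_cast [this]; ring
    have e : (Nat.fib (n + 1 + 1) : ℤ) = Nat.fib (n + 2) := by norm_num
    have e2 : (Nat.fib (n + 1 + 2) : ℤ) = Nat.fib (n + 3) := by norm_num
    rw [e, e2, h]
    linear_combination (-1 : ℤ) * ih + (Nat.fib (n + 2) : ℤ) * h2

lemma bern2_neg_emod (N x : ℤ) (hN : 0 < N) :
    bern2 ((((-x) % N : ℤ) : ℝ) / N) = bern2 (((x % N : ℤ) : ℝ) / N) := by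
  rcases eq_or_ne (x % N) 0 with h | h
  · have hd : N ∣ x := Int.dvd_of_emod_eq_zero h
    have h' : (-x) % N = 0 := Int.emod_eq_zero_of_dvd (dvd_neg.mpr hd)
    rw [h, h']
  · have h0 : x % N ≡ x [ZMOD N] := Int.emod_emod_of_dvd x dvd_rfl
    have hNs : (N : ℤ) ≡ 0 [ZMOD N] := (Int.modEq_zero_iff_dvd).mpr dvd_rfl
    have h1 : N - x % N ≡ -x [ZMOD N] := by
      have := hNs.sub h0
      simpa using this
    have hb1 : 0 ≤ x % N := Int.emod_nonneg x hN.ne'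
    have hb2 : x % N < N := Int.emod_lt_of_pos x hN
    have h2 : (N - x % N) % N = N - x % N := Int.emod_eq_of_lt (by omega) (by omega)
    have h' : (-x) % N = N - x % N := by
      have h1' : (N - x % N) % N = (-x) % N := h1
      omega
    rw [h']
    have hN0 : (N : ℝ) ≠ 0 := by exact_mod_cast hN.ne'
    unfold bern2
    push_cast
    field_simp
    ring

/-- For Fibonacci numbers, `k ≥ 3`, `z = F_{k−1}` and `N = F_k`:
`gcd(z, N) = 1`, and for any `z'` with `zz' ≡ 1 (mod N)` the mixture sums for `z` and
`z'` coincide: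
`∑_{m,ℓ=1}^{N−1} B₁(m/N) B₂(((z(m−ℓ)) mod N)/N) B₁(ℓ/N)
  = ∑_{m,ℓ=1}^{N−1} B₁(m/N) B₂(((z'(m−ℓ)) mod N)/N) B₁(ℓ/N)`. -/
theorem stmt17 (k : ℕ) (hk : 3 ≤ k) :
    Nat.gcd (Nat.fib (k - 1)) (Nat.fib k) = 1 ∧
    ∀ z' : ℤ, (Nat.fib (k - 1) : ℤ) * z' ≡ 1 [ZMOD (Nat.fib k : ℤ)] →
      ∑ m ∈ Finset.Icc 1 (Nat.fib k - 1), ∑ l ∈ Finset.Icc 1 (Nat.fib k - 1),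
          bern1 ((m : ℝ) / (Nat.fib k)) *
            bern2 (((((Nat.fib (k - 1) : ℤ) * ((m : ℤ) - (l : ℤ))) % (Nat.fib k : ℤ) : ℤ) : ℝ)
              / (Nat.fib k)) *
            bern1 ((l : ℝ) / (Nat.fib k))
        = ∑ m ∈ Finset.Icc 1 (Nat.fib k - 1), ∑ l ∈ Finset.Icc 1 (Nat.fib k - 1),
            bern1 ((m : ℝ) / (Nat.fib k)) *
              bern2 ((((z' * ((m : ℤ) - (l : ℤ))) % (Nat.fib k : ℤ) : ℤ) : ℝ) / (Nat.fib k)) *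
              bern1 ((l : ℝ) / (Nat.fib k)) := by
  obtain ⟨n, rfl⟩ : ∃ n, k = n + 3 := ⟨k - 3, by omega⟩
  set N : ℤ := (Nat.fib (n + 3) : ℤ) with hNdef
  set z : ℤ := (Nat.fib (n + 3 - 1) : ℤ) with hzdef
  have hkey : n + 3 - 1 = n + 2 := by omega
  have hNpos : 0 < N := by
    have h := Nat.fib_pos.mpr (show 0 < n + 3 by omega)
    rw [hNdef]; exact_mod_cast h
  constructor
  · have := Nat.fib_coprime_fib_succ (n + 2)
    simpa [hkey, Nat.Coprime] using this
  · intro z' hz'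
    have hzsq : z * z ≡ (-1) ^ (n + 3) [ZMOD N] := by
      have hc := cassini (n + 1)
      have heq : z * z - (-1) ^ (n + 3) = N * Nat.fib (n + 1) := by
        simp only [hzdef, hkey, hNdef]
        have h3 : ((-1 : ℤ)) ^ (n + 3) = (-1) ^ (n + 1) := by ring
        rw [h3]
        have e : (Nat.fib (n + 1 + 1) : ℤ) = Nat.fib (n + 2) := by norm_num
        have e2 : (Nat.fib (n + 1 + 2) : ℤ) = Nat.fib (n + 3) := by norm_num
        rw [e, e2] at hc
        linarith [hc]
      have hdvd : N ∣ z * z - (-1) ^ (n + 3) := ⟨Nat.fib (n + 1), heq⟩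
      exact Int.ModEq.symm (Int.modEq_iff_dvd.mpr hdvd)
    have hz'' : z' ≡ (-1) ^ (n + 3) * z [ZMOD N] := by
      have h1 : z * z * z' ≡ (-1) ^ (n + 3) * z' [ZMOD N] := hzsq.mul_right z'
      have h2 : z * z * z' ≡ z * 1 [ZMOD N] := by
        have := hz'.mul_left z
        simpa [mul_assoc] using this
      have h3 : (-1 : ℤ) ^ (n + 3) * z' ≡ z [ZMOD N] := by
        calc (-1 : ℤ) ^ (n + 3) * z' ≡ z * z * z' [ZMOD N] := h1.symm
          _ ≡ z * 1 [ZMOD N] := h2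
          _ = z := by ring
      have h4 := h3.mul_left ((-1 : ℤ) ^ (n + 3))
      have he : ((-1 : ℤ) ^ (n + 3)) * ((-1 : ℤ) ^ (n + 3) * z') = z' := by
        rw [← mul_assoc, ← pow_add, Even.neg_one_pow ⟨n + 3, rfl⟩, one_mul]
      rwa [he] at h4
    have key : ∀ c : ℤ,
        bern2 (((z * c % N : ℤ) : ℝ) / (Nat.fib (n + 3) : ℝ))
          = bern2 (((z' * c % N : ℤ) : ℝ) / (Nat.fib (n + 3) : ℝ)) := by
      intro c
      have hcast : ((Nat.fib (n + 3) : ℕ) : ℝ) = ((N : ℤ) : ℝ) := by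
        rw [hNdef]; norm_cast
      rw [hcast]
      have hmod : z' * c % N = ((-1) ^ (n + 3) * z * c) % N := by
        have h5 : z' * c ≡ (-1) ^ (n + 3) * z * c [ZMOD N] := by
          simpa [mul_assoc] using hz''.mul_right c
        exact h5
      rw [hmod]
      rcases Nat.even_or_odd (n + 3) with he | ho
      · rw [he.neg_one_pow]
        simp
      · rw [ho.neg_one_pow]
        rw [show (-1 : ℤ) * z * c = -(z * c) by ring, bern2_neg_emod N (z * c) hNpos]
    refine Finset.sum_congr rfl fun m _ => Finset.sum_congr rfl fun l _ => ?_
    rw [key ((m : ℤ) - (l : ℤ))]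
end
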